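/- arXiv:2507.04689 — 10 statements merged into one kernel-verified Lean document; each statement's English description precedes it below -/
import Mathlib

section
/- Let a_1,...,a_n be pairwise distinct elements of F_q with s_{n-1}(a_1,...,a_n) = 0, where s_{n-1} is the elementary symmetric polynomial of degree n-1. Then none of the a_i is zero, and for every i, s_{n-2}(a^{(i)}) ≠ 0, where a^{(i)} is the tuple obtained by deleting a_i. -/
open Finset

lemma key_esymm_split {F : Type*} [CommRing F] {n : ℕ} (hn : 2 ≤ n) (a : Fin n → F)
    (i : Fin n) :
    ∑ A ∈ (univ : Finset (Fin n)).powersetCard (n - 1), ∏ j ∈ A, a j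
      = a i * (∑ t ∈ (univ.erase i).powersetCard (n - 2), ∏ j ∈ t, a j)
        + ∏ j ∈ univ.erase i, a j := by
  have hcard : (univ.erase i).card = n - 1 := by
    rw [card_erase_of_mem (mem_univ i), card_univ, Fintype.card_fin]
  have huniv : (univ : Finset (Fin n)) = insert i (univ.erase i) :=
    (insert_erase (mem_univ i)).symm
  have hsub : n - 1 = (n - 2) + 1 := by omega
  rw [huniv, hsub, powersetCard_succ_insert (notMem_erase i _),
    erase_insert (notMem_erase i _)]
  rw [sum_union]
  · have h1 : (univ.erase i).powersetCard (n - 2 + 1) = {univ.erase i} := by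
      rw [← hsub, ← hcard, powersetCard_self]
    rw [h1, sum_singleton, sum_image]
    · rw [mul_sum, add_comm]
      congr 1
      refine sum_congr rfl fun t ht => ?_
      have hit : i ∉ t := fun hit =>
        (notMem_erase i _) ((mem_powersetCard.mp ht).1 hit)
      rw [prod_insert hit]
    · intro x hx y hy hxy
      have hix : i ∉ x := fun hix => (notMem_erase i _) ((mem_powersetCard.mp hx).1 hix)
      have hiy : i ∉ y := fun hiy => (notMem_erase i _) ((mem_powersetCard.mp hy).1 hiy)
      rw [← erase_insert hix, ← erase_insert hiy, hxy]
  · rw [disjoint_left]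
    intro A hA hA'
    obtain ⟨t, ht, rfl⟩ := mem_image.mp hA'
    exact (notMem_erase i _) ((mem_powersetCard.mp hA).1 (mem_insert_self i t))

theorem esymm_nonzero_of_tsub1_eq_zero {F : Type*} [Field F] [Fintype F] {n : ℕ}
    (a : Fin n → F) (ha : Function.Injective a)
    (h : ∑ A ∈ (univ : Finset (Fin n)).powersetCard (n - 1), ∏ j ∈ A, a j = 0) :
    (∀ i, a i ≠ 0) ∧
      ∀ i, (∑ t ∈ (univ.erase i).powersetCard (n - 2), ∏ j ∈ t, a j) ≠ 0 := by
  rcases Nat.lt_or_ge n 2 with hn | hn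
  · -- then n - 1 = 0, sum is 1, contradiction
    have : n - 1 = 0 := by omega
    rw [this, powersetCard_zero, sum_singleton, prod_empty] at h
    exact absurd h one_ne_zero
  have key := fun i => key_esymm_split hn a i
  have hane : ∀ i, a i ≠ 0 := by
    intro i hi
    have := key i
    rw [h, hi, zero_mul, zero_add] at this
    obtain ⟨j, hj, hj0⟩ := prod_eq_zero_iff.mp this.symm
    exact (mem_erase.mp hj).1 (ha (hj0.trans hi.symm))
  refine ⟨hane, fun i hS => ?_⟩
  have := key i
  rw [h, hS, mul_zero, zero_add] at this
  obtain ⟨j, hj, hj0⟩ := prod_eq_zero_iff.mp this.symm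
  exact hane j hj0
end

section
/- Let n = 2k ≥ 8, 2 ≤ r ≤ k-2, and let a_1,...,a_n ∈ F_q be pairwise distinct and v_1,...,v_n ∈ F_q nonzero. Then the code GRS_{k,r}(a,v), spanned by the rows (v_1 a_1^j, ..., v_n a_n^j) for j ∈ {0,...,k} \ {k-r}, is never self-dual (i.e., it never equals its dual code under the standard bilinear form on F_q^n). -/
open Finset Polynomial

/-- The subcode `GRS_{k,r}(a,v)` of the `[n,k+1]` GRS code: evaluations of polynomials of
degree at most `k` whose coefficient of `x^(k-r)` vanishes. -/
def GRSsub {F : Type*} [Field F] (n k r : ℕ) (a v : Fin n → F) : Set (Fin n → F) :=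
  {c | ∃ f : F[X], f.natDegree ≤ k ∧ f.coeff (k - r) = 0 ∧ ∀ i, c i = v i * f.eval (a i)}

/-- The dual code with respect to the standard dot product. -/
def dualCode {F : Type*} [Field F] {n : ℕ} (C : Set (Fin n → F)) : Set (Fin n → F) :=
  {w | ∀ c ∈ C, ∑ i, w i * c i = 0}

theorem GRSsub_not_selfdual {F : Type*} [Field F] [Fintype F] {n k r : ℕ}
    (hnk : n = 2 * k) (hn : 8 ≤ n) (hr1 : 2 ≤ r) (hr2 : r ≤ k - 2)
    (a v : Fin n → F) (ha : Function.Injective a) (hv : ∀ i, v i ≠ 0) :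
    GRSsub n k r a v ≠ dualCode (GRSsub n k r a v) := by
  intro hC
  have k4 : 4 ≤ k := by omega
  set m := k - r with hm
  have hm2 : 2 ≤ m := by omega
  have hmk : m ≤ k - 2 := by omega
  -- the monomial words are in the code
  have mem : ∀ i : ℕ, i ≤ k → i ≠ m → (fun t => v t * a t ^ i) ∈ GRSsub n k r a v := by
    intro i hik him
    refine ⟨X ^ i, by simpa using hik, ?_, fun t => by simp⟩
    rw [← hm, coeff_X_pow, if_neg (fun h => him h.symm)]
  -- orthogonality of monomial words
  have orth : ∀ i j : ℕ, i ≤ k → i ≠ m → j ≤ k → j ≠ m →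
      ∑ t, (v t * a t ^ i) * (v t * a t ^ j) = 0 := by
    intro i j hik him hjk hjm
    have h1 := mem i hik him
    rw [hC] at h1
    exact h1 _ (mem j hjk hjm)
  -- all power sums up to n-1 vanish
  have psum : ∀ s : ℕ, s < n → ∑ t, v t ^ 2 * a t ^ s = 0 := by
    intro s hs
    obtain ⟨i, j, hij, hik, him, hjk, hjm⟩ :
        ∃ i j : ℕ, i + j = s ∧ i ≤ k ∧ i ≠ m ∧ j ≤ k ∧ j ≠ m := by
      rcases le_or_gt s k with h | h
      · rcases eq_or_ne s m with h1 | hsm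
        · exact ⟨1, s - 1, by omega, by omega, by omega, by omega, by omega⟩
        · exact ⟨0, s, by omega, by omega, by omega, by omega, hsm⟩
      · rcases eq_or_ne (s - k) m with h2 | h2
        · exact ⟨k - 1, m + 1, by omega, by omega, by omega, by omega, by omega⟩
        · exact ⟨k, s - k, by omega, le_rfl, by omega, by omega, h2⟩
    have := orth i j hik him hjk hjm
    rw [← this]
    refine Finset.sum_congr rfl fun t _ => ?_
    rw [← hij, pow_add]; ring
  -- Vandermonde argument
  have hdet : (Matrix.vandermonde a).det ≠ 0 := Matrix.det_vandermonde_ne_zero_iff.2 ha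
  have hinj : Function.Injective (Matrix.vandermonde a).vecMul :=
    Matrix.vecMul_injective_iff_isUnit.2
      ((Matrix.isUnit_iff_isUnit_det _).2 (isUnit_iff_ne_zero.2 hdet))
  have hzero : (Matrix.vandermonde a).vecMul (fun t => v t ^ 2) =
      (Matrix.vandermonde a).vecMul 0 := by
    funext s
    rw [Matrix.zero_vecMul]
    simpa [Matrix.vecMul, Matrix.vandermonde, dotProduct] using
      psum (s : ℕ) s.isLt
  have := congrFun (hinj hzero) ⟨0, by omega⟩
  simp at this
  exact hv _ this
end

section
/- Let n = 2k ≥ 8 and let a_1,...,a_n ∈ F_q be pairwise distinct with u_i = ∏_{j≠i}(a_j - a_i)^{-1} and t_1 = ∑_i a_i. Then there exist nonzero v_1,...,v_n ∈ F_q such that GRS_{k,1}(a,v) is self-dual if and only if t_1 = 0 and u_1,...,u_n are either all squares in F_q or all non-squares in F_q. -/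
open Finset Polynomial

lemma phi_eval {F : Type*} [Field F] {n : ℕ} (hn : 1 ≤ n) (a : Fin n → F)
    (ha : Function.Injective a) (g : F[X]) (hg : g.natDegree ≤ n) :
    ∑ i, (∏ j ∈ univ.erase i, (a j - a i)⁻¹) * g.eval (a i)
      = (-1 : F) ^ (n - 1) * (g.coeff (n - 1) + g.coeff n * ∑ i, a i) := by
  classical
  set A : F[X] := ∏ i : Fin n, (X - C (a i)) with hA
  have hmon : A.Monic := monic_prod_of_monic _ _ fun i _ => monic_X_sub_C _
  have hAdeg : A.natDegree = n := by
    rw [hA, natDegree_prod_of_monic _ _ fun i _ => monic_X_sub_C _]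
    simp
  have hAn : A.coeff n = 1 := by rw [← hAdeg]; exact hmon.coeff_natDegree
  have hc : #(univ : Finset (Fin n)) = n := by simp
  have hAn1 : A.coeff (n - 1) = -∑ i, a i := by
    have := prod_X_sub_C_coeff_card_pred (univ : Finset (Fin n)) a (by rw [hc]; omega)
    rwa [hc] at this
  set c := g.coeff n with hcdef
  set r := g - C c * A with hr
  have hrdeg : r.degree < (n : WithBot ℕ) := by
    rw [degree_lt_iff_coeff_zero]
    intro m hm
    rcases eq_or_lt_of_le hm with hmn | hmn
    · simp [hr, coeff_C_mul, ← hmn, hAn, hcdef]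
    · have h1 : g.coeff m = 0 := coeff_eq_zero_of_natDegree_lt (lt_of_le_of_lt hg hmn)
      have h2 : A.coeff m = 0 := coeff_eq_zero_of_natDegree_lt (by omega)
      simp [hr, coeff_C_mul, h1, h2]
  have hrev : ∀ i, r.eval (a i) = g.eval (a i) := by
    intro i
    have hA0 : A.eval (a i) = 0 := by
      rw [hA, eval_prod]
      exact prod_eq_zero (mem_univ i) (by simp)
    simp [hr, hA0]
  have hinj : Set.InjOn a (univ : Finset (Fin n)) := fun x _ y _ h => ha h
  have hint : r = Lagrange.interpolate univ a fun i => r.eval (a i) :=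
    Lagrange.eq_interpolate hinj (by rw [hc]; exact hrdeg)
  have hbasis : ∀ i : Fin n, (Lagrange.basis univ a i).coeff (n - 1)
      = ∏ j ∈ univ.erase i, (a i - a j)⁻¹ := by
    intro i
    have hbd : (Lagrange.basis univ a i).natDegree = n - 1 := by
      rw [Lagrange.natDegree_basis hinj (mem_univ i), hc]
    rw [← hbd, ← leadingCoeff, Lagrange.basis, leadingCoeff_prod]
    refine prod_congr rfl fun j hj => ?_
    rw [Lagrange.basisDivisor, leadingCoeff_mul, leadingCoeff_C,
      (monic_X_sub_C (a j)).leadingCoeff, mul_one]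
  have hcoeffr : r.coeff (n - 1) = ∑ i, r.eval (a i) * ∏ j ∈ univ.erase i, (a i - a j)⁻¹ := by
    conv_lhs => rw [hint]
    rw [Lagrange.interpolate_apply, finset_sum_coeff]
    exact Finset.sum_congr rfl fun i _ => by rw [coeff_C_mul, hbasis i]
  have hsign : ∀ i : Fin n, (∏ j ∈ univ.erase i, (a j - a i)⁻¹)
      = (-1 : F) ^ (n - 1) * ∏ j ∈ univ.erase i, (a i - a j)⁻¹ := by
    intro i
    have hcard' : #(univ.erase i) = n - 1 := by
      rw [card_erase_of_mem (mem_univ i), hc]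
    calc ∏ j ∈ univ.erase i, (a j - a i)⁻¹
        = ∏ j ∈ univ.erase i, ((-1 : F) * (a i - a j)⁻¹) := by
          refine prod_congr rfl fun j _ => ?_
          rw [show a j - a i = -(a i - a j) by ring, inv_neg, neg_eq_neg_one_mul]
      _ = (-1 : F) ^ (n - 1) * ∏ j ∈ univ.erase i, (a i - a j)⁻¹ := by
          rw [prod_mul_distrib, prod_const, hcard']
  have hrc : r.coeff (n - 1) = g.coeff (n - 1) + c * ∑ i, a i := by
    rw [hr, coeff_sub, coeff_C_mul, hAn1]
    ring
  calc ∑ i, (∏ j ∈ univ.erase i, (a j - a i)⁻¹) * g.eval (a i)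
      = (-1 : F) ^ (n - 1) * ∑ i, r.eval (a i) * ∏ j ∈ univ.erase i, (a i - a j)⁻¹ := by
        rw [mul_sum]
        refine sum_congr rfl fun i _ => ?_
        rw [hsign i, hrev i]; ring
    _ = (-1 : F) ^ (n - 1) * r.coeff (n - 1) := by rw [hcoeffr]
    _ = (-1 : F) ^ (n - 1) * (g.coeff (n - 1) + g.coeff n * ∑ i, a i) := by rw [hrc]


lemma moments_eq {F : Type*} [Field F] {n : ℕ} (a : Fin n → F) (ha : Function.Injective a)
    (w x : Fin n → F)
    (h : ∀ m : Fin n, ∑ i, w i * a i ^ (m : ℕ) = ∑ i, x i * a i ^ (m : ℕ)) :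
    w = x := by
  set V := Matrix.vandermonde a with hV
  have hdet : IsUnit V.det := by
    rw [hV, Matrix.det_vandermonde]
    refine (prod_ne_zero_iff.mpr fun i _ => prod_ne_zero_iff.mpr fun j hj => ?_).isUnit
    exact sub_ne_zero_of_ne fun hij => (mem_Ioi.mp hj).ne' (ha hij)
  have hvm : Matrix.vecMul w V = Matrix.vecMul x V := by
    funext m
    simpa [Matrix.vecMul, dotProduct, hV, Matrix.vandermonde] using h m
  have := congrArg (fun y => Matrix.vecMul y V⁻¹) hvm
  simpa [Matrix.vecMul_vecMul, Matrix.mul_nonsing_inv V hdet] using this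


namespace GRSaux

variable {F : Type*} [Field F]

/-- exponent map: `{0, …, k-2, k}` indexed by `Fin k`. -/
def expo (k : ℕ) (j : Fin k) : ℕ := if (j : ℕ) = k - 1 then k else (j : ℕ)

lemma expo_le {k : ℕ} (j : Fin k) : expo k j ≤ k := by
  unfold expo; split_ifs <;> [omega; exact j.isLt.le]

lemma expo_ne {k : ℕ} (hk : 1 ≤ k) (j : Fin k) : expo k j ≠ k - 1 := by
  have := j.isLt
  unfold expo; split_ifs <;> omega

lemma expo_inj {k : ℕ} : Function.Injective (expo k) := by
  intro j1 j2 h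
  have h1 := j1.isLt; have h2 := j2.isLt
  unfold expo at h
  exact Fin.ext (by split_ifs at h <;> omega)

lemma expo_image {k : ℕ} (hk : 1 ≤ k) :
    image (fun j : Fin k => expo k j) univ = (range (k + 1)).erase (k - 1) := by
  ext m
  simp only [mem_image, mem_univ, true_and, mem_erase, mem_range]
  constructor
  · rintro ⟨j, rfl⟩
    have := j.isLt
    unfold expo; split_ifs <;> omega
  · rintro ⟨h1, h2⟩
    rcases lt_or_ge m (k - 1) with h | h
    · exact ⟨⟨m, by omega⟩, by simp [expo, h1]⟩
    · exact ⟨⟨k - 1, by omega⟩, by simp [expo]; omega⟩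

lemma eval_expo {k : ℕ} (hk : 1 ≤ k) (f : F[X]) (hdeg : f.natDegree ≤ k)
    (hc : f.coeff (k - 1) = 0) (x : F) :
    f.eval x = ∑ j : Fin k, f.coeff (expo k j) * x ^ expo k j := by
  rw [eval_eq_sum_range' (Nat.lt_succ_of_le hdeg) x,
    ← Finset.sum_erase (a := k - 1) _ (by rw [hc, zero_mul]),
    ← expo_image hk, Finset.sum_image (fun j _ j' _ h => expo_inj h)]

/-- polynomial with coefficients `g` at exponents `expo k`. -/
noncomputable def polyOf {k : ℕ} (g : Fin k → F) : F[X] :=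
  ∑ j : Fin k, C (g j) * X ^ expo k j

lemma polyOf_natDegree_le {k : ℕ} (g : Fin k → F) : (polyOf g).natDegree ≤ k :=
  natDegree_sum_le_of_forall_le univ _ fun j _ =>
    (natDegree_C_mul_le _ _).trans (by simp [expo_le])

lemma polyOf_coeff_km1 {k : ℕ} (hk : 1 ≤ k) (g : Fin k → F) :
    (polyOf g).coeff (k - 1) = 0 := by
  rw [polyOf, finset_sum_coeff]
  refine sum_eq_zero fun j _ => ?_
  rw [coeff_C_mul, coeff_X_pow, if_neg (fun h => expo_ne hk j h.symm), mul_zero]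

lemma polyOf_eval {k : ℕ} (g : Fin k → F) (x : F) :
    (polyOf g).eval x = ∑ j : Fin k, g j * x ^ expo k j := by
  rw [polyOf, eval_finset_sum]; simp

lemma polyOf_coeff {k : ℕ} (g : Fin k → F) (j : Fin k) :
    (polyOf g).coeff (expo k j) = g j := by
  rw [polyOf, finset_sum_coeff]
  rw [Finset.sum_eq_single j]
  · simp [coeff_X_pow]
  · intro j' _ hj'
    rw [coeff_C_mul, coeff_X_pow, if_neg (fun h => hj' (expo_inj h.symm)), mul_zero]
  · simp

/-- the linear parametrization of the code. -/
noncomputable def Tmap {n k : ℕ} (a v : Fin n → F) : (Fin k → F) →ₗ[F] (Fin n → F) where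
  toFun g := fun i => v i * ∑ j : Fin k, g j * a i ^ expo k j
  map_add' g h := by
    funext i
    simp only [Pi.add_apply, add_mul, sum_add_distrib, mul_add]
  map_smul' c g := by
    funext i
    simp only [Pi.smul_apply, smul_eq_mul, RingHom.id_apply, Finset.mul_sum]
    exact sum_congr rfl fun j _ => by ring

/-- the standard dot product bilinear form. -/
noncomputable def dotB (n : ℕ) : LinearMap.BilinForm F (Fin n → F) :=
  LinearMap.mk₂ F (fun x y => ∑ i, x i * y i)
    (fun x x' y => by simp [add_mul, sum_add_distrib])
    (fun c x y => by
      simp only [Pi.smul_apply, smul_eq_mul, Finset.mul_sum]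
      exact sum_congr rfl fun i _ => by ring)
    (fun x y y' => by simp [mul_add, sum_add_distrib])
    (fun c x y => by
      simp only [Pi.smul_apply, smul_eq_mul, Finset.mul_sum]
      exact sum_congr rfl fun i _ => by ring)

lemma dotB_apply {n : ℕ} (x y : Fin n → F) : dotB n x y = ∑ i, x i * y i := rfl

lemma dotB_refl {n : ℕ} : (dotB (F := F) n).IsRefl := by
  intro x y h
  rw [dotB_apply] at h ⊢
  rw [← h]
  exact sum_congr rfl fun i _ => mul_comm _ _

lemma dotB_nondegenerate {n : ℕ} : (dotB (F := F) n).Nondegenerate := by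
  refine (LinearMap.IsRefl.nondegenerate_iff_separatingLeft (B := (dotB (F := F) n : (Fin n → F) →ₗ[F] (Fin n → F) →ₗ[F] F)) (dotB_refl : LinearMap.IsRefl _)).mpr ?_
  intro x hx
  funext i
  have := hx (Pi.single i 1)
  rw [dotB_apply] at this
  simpa [Pi.single_apply, mul_ite, Finset.sum_ite_eq'] using this

lemma decomp {k j : ℕ} (hk : 4 ≤ k) (hj : j ≤ 2 * k - 2 ∨ j = 2 * k) :
    ∃ p m : ℕ, p ≤ k ∧ m ≤ k ∧ p ≠ k - 1 ∧ m ≠ k - 1 ∧ p + m = j := by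
  rcases hj with hj | rfl
  · by_cases h1 : j = 2 * k - 2
    · exact ⟨k, k - 2, by omega, by omega, by omega, by omega, by omega⟩
    by_cases h2 : j = 2 * k - 3
    · exact ⟨k, k - 3, by omega, by omega, by omega, by omega, by omega⟩
    · exact ⟨min j (k - 2), j - min j (k - 2), by omega, by omega, by omega, by omega, by omega⟩
  · exact ⟨k, k, by omega, by omega, by omega, by omega, by omega⟩

end GRSaux

open GRSaux

theorem GRSsub_one_selfdual_iff {F : Type*} [Field F] [Fintype F] {n k : ℕ}
    (hnk : n = 2 * k) (hn : 8 ≤ n)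
    (a : Fin n → F) (ha : Function.Injective a)
    (u : Fin n → F) (hu : ∀ i, u i = ∏ j ∈ univ.erase i, (a j - a i)⁻¹) :
    (∃ v : Fin n → F, (∀ i, v i ≠ 0) ∧ GRSsub n k 1 a v = dualCode (GRSsub n k 1 a v)) ↔
      (∑ i, a i = 0 ∧ ((∀ i, IsSquare (u i)) ∨ ∀ i, ¬ IsSquare (u i))) := by
  classical
  have hk : 4 ≤ k := by omega
  have hn1 : 1 ≤ n := by omega
  set ε : F := (-1) ^ (n - 1) with hε
  have hε2 : ε * ε = 1 := by
    rw [hε, ← pow_add]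
    exact Even.neg_one_pow ⟨n - 1, by omega⟩
  have hεne : ε ≠ 0 := fun h => one_ne_zero (α := F) (by rw [← hε2, h, zero_mul])
  have hune : ∀ i, u i ≠ 0 := fun i => by
    rw [hu i]
    exact prod_ne_zero_iff.mpr fun j hj =>
      inv_ne_zero (sub_ne_zero_of_ne fun hij => (mem_erase.mp hj).1 (ha hij))
  have hPhi : ∀ g : F[X], g.natDegree ≤ n →
      ∑ i, u i * g.eval (a i) = ε * (g.coeff (n - 1) + g.coeff n * ∑ i, a i) := by
    intro g hg
    simp_rw [hu]
    exact phi_eval hn1 a ha g hg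
  have hmomX : ∀ m : ℕ, m ≤ n → ∑ i, u i * a i ^ m
      = ε * ((if n - 1 = m then (1 : F) else 0) + (if n = m then (1 : F) else 0) * ∑ i, a i) := by
    intro m hm
    have h := hPhi (X ^ m) (by simpa using hm)
    simpa [coeff_X_pow] using h
  have hmomu : ∀ m : ℕ, m ≤ n - 2 → ∑ i, u i * a i ^ m = 0 := by
    intro m hm
    rw [hmomX m (by omega), if_neg (by omega), if_neg (by omega)]
    ring
  have hmomu1 : ∑ i, u i * a i ^ (n - 1) = ε := by
    rw [hmomX (n - 1) (by omega), if_pos rfl, if_neg (by omega)]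
    ring
  have hmomun : ∑ i, u i * a i ^ n = ε * ∑ i, a i := by
    rw [hmomX n le_rfl, if_neg (by omega), if_pos rfl]
    ring
  constructor
  · rintro ⟨v, hv, hC⟩
    have hmono : ∀ p : ℕ, p ≤ k → p ≠ k - 1 →
        (fun i => v i * a i ^ p) ∈ GRSsub n k 1 a v := fun p hp hp' =>
      ⟨X ^ p, by simpa using hp, by rw [coeff_X_pow, if_neg (by omega)], fun i => by simp⟩
    have hpair : ∀ j : ℕ, j ≤ n - 2 ∨ j = n → ∑ i, (v i * v i) * a i ^ j = 0 := by
      intro j hj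
      obtain ⟨p, m, hp, hm, hp', hm', rfl⟩ := decomp (j := j) hk (by omega)
      have h1 := hmono p hp hp'
      rw [hC] at h1
      have h2 := h1 _ (hmono m hm hm')
      rw [← h2]
      exact sum_congr rfl fun i _ => by rw [pow_add]; ring
    set lam : F := ε * ∑ i, (v i * v i) * a i ^ (n - 1) with hlam
    have hw : (fun i => v i * v i) = (fun i => lam * u i) := by
      apply moments_eq a ha
      intro m
      show ∑ i, (v i * v i) * a i ^ (m : ℕ) = ∑ i, (lam * u i) * a i ^ (m : ℕ)
      have e1 : ∑ i, (lam * u i) * a i ^ (m : ℕ) = lam * ∑ i, u i * a i ^ (m : ℕ) := by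
        rw [mul_sum]; exact sum_congr rfl fun i _ => by ring
      by_cases hm : (m : ℕ) = n - 1
      · rw [hm] at e1 ⊢
        rw [e1, hmomu1, hlam]
        linear_combination (-(∑ i, (v i * v i) * a i ^ (n - 1))) * hε2
      · have hmlt := m.isLt
        rw [hpair (m : ℕ) (Or.inl (by omega)), e1, hmomu (m : ℕ) (by omega), mul_zero]
    have hweq : ∀ i, v i * v i = lam * u i := fun i => congrFun hw i
    have hlam0 : lam ≠ 0 := by
      intro h0
      have h1 := hweq ⟨0, by omega⟩
      rw [h0, zero_mul] at h1
      exact mul_ne_zero (hv _) (hv _) h1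
    have ht10 : ∑ i, a i = 0 := by
      have h1 : ∑ i, (v i * v i) * a i ^ n = 0 := hpair n (Or.inr rfl)
      have h2 : ∑ i, (v i * v i) * a i ^ n = lam * (ε * ∑ i, a i) := by
        rw [← hmomun, mul_sum]
        exact sum_congr rfl fun i _ => by rw [hweq i]; ring
      rw [h2] at h1
      rcases mul_eq_zero.mp h1 with h | h
      · exact absurd h hlam0
      · rcases mul_eq_zero.mp h with h' | h'
        · exact absurd h' hεne
        · exact h'
    refine ⟨ht10, ?_⟩
    by_cases hs : IsSquare lam
    · left
      intro i
      obtain ⟨r, hr⟩ := hs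
      have hr0 : r ≠ 0 := fun h => hlam0 (by rw [hr, h, mul_zero])
      refine ⟨r⁻¹ * v i, ?_⟩
      have h1 := hweq i
      rw [hr] at h1
      field_simp
      linear_combination -h1
    · right
      intro i hsq
      apply hs
      obtain ⟨t, ht⟩ := hsq
      have ht0 : t ≠ 0 := fun h => hune i (by rw [ht, h, mul_zero])
      refine ⟨v i * t⁻¹, ?_⟩
      have h1 := hweq i
      rw [ht] at h1
      field_simp
      linear_combination -h1
  · rintro ⟨ht, hsq⟩
    obtain ⟨lam, hlam0, hsq2⟩ : ∃ lam : F, lam ≠ 0 ∧ ∀ i, IsSquare (lam * u i) := by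
      rcases hsq with h | h
      · exact ⟨1, one_ne_zero, fun i => by rw [one_mul]; exact h i⟩
      · refine ⟨u ⟨0, by omega⟩, hune _, fun i => ?_⟩
        have h1 : quadraticChar F (u ⟨0, by omega⟩) = -1 :=
          quadraticChar_neg_one_iff_not_isSquare.mpr (h _)
        have h2 : quadraticChar F (u i) = -1 :=
          quadraticChar_neg_one_iff_not_isSquare.mpr (h i)
        have h3 : quadraticChar F (u ⟨0, by omega⟩ * u i) = 1 := by
          rw [map_mul, h1, h2]; ring
        exact (quadraticChar_one_iff_isSquare (mul_ne_zero (hune _) (hune i))).mp h3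
    choose v hv2 using hsq2
    have hv0 : ∀ i, v i ≠ 0 := by
      intro i h0
      have h1 := hv2 i
      rw [h0, mul_zero] at h1
      exact mul_ne_zero hlam0 (hune i) h1
    refine ⟨v, hv0, ?_⟩
    have hsub : GRSsub n k 1 a v ⊆ dualCode (GRSsub n k 1 a v) := by
      rintro c ⟨f, hf1, hf2, hf3⟩ d ⟨g, hg1, hg2, hg3⟩
      have hdeg : (f * g).natDegree ≤ n := natDegree_mul_le.trans (by omega)
      have hco : (f * g).coeff (n - 1) = 0 := by
        rw [coeff_mul]
        refine sum_eq_zero fun x hx => ?_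
        rw [HasAntidiagonal.mem_antidiagonal] at hx
        rcases (by omega : x.1 = k - 1 ∨ x.1 = k ∨ x.1 ≤ k - 2 ∨ k + 1 ≤ x.1) with h | h | h | h
        · rw [h, hf2, zero_mul]
        · rw [(by omega : x.2 = k - 1), hg2, mul_zero]
        · rw [coeff_eq_zero_of_natDegree_lt (lt_of_le_of_lt hg1 (by omega)), mul_zero]
        · rw [coeff_eq_zero_of_natDegree_lt (lt_of_le_of_lt hf1 (by omega)), zero_mul]
      calc ∑ i, c i * d i = lam * ∑ i, u i * (f * g).eval (a i) := by
            rw [mul_sum]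
            refine sum_congr rfl fun i _ => ?_
            rw [hf3 i, hg3 i, eval_mul]
            linear_combination (-(f.eval (a i) * g.eval (a i))) * hv2 i
        _ = 0 := by rw [hPhi _ hdeg, hco, ht]; ring
    have hCW : GRSsub n k 1 a v = ↑(LinearMap.range (Tmap (n := n) (k := k) a v)) := by
      ext c
      simp only [SetLike.mem_coe, LinearMap.mem_range]
      constructor
      · rintro ⟨f, hf1, hf2, hf3⟩
        refine ⟨fun j => f.coeff (expo k j), funext fun i => ?_⟩
        show v i * ∑ j : Fin k, f.coeff (expo k j) * a i ^ expo k j = c i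
        rw [hf3 i, ← eval_expo (by omega) f hf1 hf2]
      · rintro ⟨g, rfl⟩
        refine ⟨polyOf g, polyOf_natDegree_le g, polyOf_coeff_km1 (by omega) g, fun i => ?_⟩
        show Tmap a v g i = v i * (polyOf g).eval (a i)
        rw [polyOf_eval]
        rfl
    have hTinj : Function.Injective (Tmap (n := n) (k := k) a v) := by
      rw [injective_iff_map_eq_zero]
      intro g hg0
      have hfz : polyOf g = 0 := by
        refine Polynomial.eq_zero_of_natDegree_lt_card_of_eval_eq_zero _ ha (fun i => ?_) ?_
        · have h : v i * ∑ j : Fin k, g j * a i ^ expo k j = 0 := congrFun hg0 i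
          rw [polyOf_eval]
          exact (mul_eq_zero.mp h).resolve_left (hv0 i)
        · rw [Fintype.card_fin]
          exact lt_of_le_of_lt (polyOf_natDegree_le g) (by omega)
      funext j
      have h := congrArg (fun p => p.coeff (expo k j)) hfz
      simpa [polyOf_coeff] using h
    set W : Submodule F (Fin n → F) := LinearMap.range (Tmap (n := n) (k := k) a v) with hWdef
    have hfr : Module.finrank F W = k := by
      rw [hWdef, LinearMap.finrank_range_of_inj hTinj, Module.finrank_fin_fun]
    have horthrank : Module.finrank F ((dotB (F := F) n).orthogonal W) = k := by
      rw [LinearMap.BilinForm.finrank_orthogonal dotB_nondegenerate W, hfr,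
        Module.finrank_fin_fun]
      omega
    have hle : W ≤ (dotB (F := F) n).orthogonal W := by
      intro x hx
      rw [LinearMap.BilinForm.mem_orthogonal_iff]
      intro y hy
      have h1 : x ∈ GRSsub n k 1 a v := by rw [hCW]; exact hx
      have h2 : y ∈ GRSsub n k 1 a v := by rw [hCW]; exact hy
      have h3 := hsub h1 y h2
      show (dotB (F := F) n) y x = 0
      rw [dotB_apply, ← h3]
      exact sum_congr rfl fun i _ => mul_comm _ _
    have hWeq : W = (dotB (F := F) n).orthogonal W :=
      Submodule.eq_of_le_of_finrank_le hle (by rw [hfr, horthrank])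
    have hdual : dualCode (GRSsub n k 1 a v) = ↑((dotB (F := F) n).orthogonal W) := by
      ext x
      simp only [dualCode, Set.mem_setOf_eq, SetLike.mem_coe,
        LinearMap.BilinForm.mem_orthogonal_iff]
      constructor
      · intro hx y hy
        show (dotB (F := F) n) y x = 0
        rw [dotB_apply]
        have h := hx y (by rw [hCW]; exact hy)
        rw [← h]
        exact sum_congr rfl fun i _ => mul_comm _ _
      · intro hx c hc
        have h : (dotB (F := F) n) c x = 0 := hx c (by rw [← SetLike.mem_coe, ← hCW]; exact hc)
        rw [dotB_apply] at h
        rw [← h]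
        exact sum_congr rfl fun i _ => mul_comm _ _
    rw [hdual, hCW]
    exact congrArg _ hWeq
end

section
/- Let a_1,...,a_{k-1} ∈ F_q be pairwise distinct and 2 ≤ r ≤ k-1. Let G_r be the k × (k-1) matrix whose rows are (a_1^j,...,a_{k-1}^j) for j ∈ {0,...,k} \ {k-r}. Then G_r has rank at least k-2, and G_r has rank k-1 if and only if s_{k-1,r-1}(a_1,...,a_{k-1}) and s_{k-1,r}(a_1,...,a_{k-1}) are not both zero. -/
open Finset

open Polynomial Module Matrix in
theorem rank_Gr {F : Type*} [Field F] [Fintype F] {k r : ℕ}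
    (hr1 : 2 ≤ r) (hr2 : r ≤ k - 1)
    (a : Fin (k - 1) → F) (ha : Function.Injective a)
    (G : Matrix (Fin k) (Fin (k - 1)) F)
    (hG : ∀ (j : Fin k) (i : Fin (k - 1)),
      G j i = a i ^ (if (j : ℕ) < k - r then (j : ℕ) else (j : ℕ) + 1)) :
    k - 2 ≤ G.rank ∧
      (G.rank = k - 1 ↔
        ¬((∑ t ∈ (univ : Finset (Fin (k - 1))).powersetCard (r - 1), ∏ i ∈ t, a i) = 0 ∧
          (∑ t ∈ (univ : Finset (Fin (k - 1))).powersetCard r, ∏ i ∈ t, a i) = 0)) := by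
  classical
  have hk3 : 3 ≤ k := by omega
  -- exponents
  set e : Fin k → ℕ := fun j => if (j : ℕ) < k - r then (j : ℕ) else (j : ℕ) + 1 with he_def
  have he_le : ∀ j : Fin k, e j ≤ k := by
    intro j; have := j.isLt; simp only [e]; split <;> omega
  have he_ne : ∀ j : Fin k, e j ≠ k - r := by
    intro j; simp only [e]; split <;> omega
  have he_inj : Function.Injective e := by
    intro j1 j2 h
    have h1 := j1.isLt; have h2 := j2.isLt
    simp only [e] at h
    apply Fin.ext
    split at h <;> split at h <;> omega
  have he_cover : ∀ m : ℕ, m ≤ k → m ≠ k - r → ∃ j : Fin k, e j = m := by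
    intro m hm hne
    rcases lt_or_ge m (k - r) with h | h
    · refine ⟨⟨m, by omega⟩, ?_⟩
      simp only [e, Fin.val_mk]
      split <;> omega
    · have hm1 : 1 ≤ m := by omega
      refine ⟨⟨m - 1, by omega⟩, ?_⟩
      simp only [e, Fin.val_mk]
      split <;> omega
  -- the polynomial P
  set P : F[X] := ∏ i : Fin (k - 1), (X - C (a i)) with hP_def
  have hPm : P.Monic := monic_prod_of_monic _ _ fun i _ => monic_X_sub_C _
  have hP0 : P ≠ 0 := hPm.ne_zero
  have hPdeg : P.natDegree = k - 1 := by
    rw [hP_def, natDegree_prod _ _ fun i _ => X_sub_C_ne_zero _]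
    simp
  have hPms : P = ((univ.val.map a).map fun t => X - C t).prod := by
    rw [Multiset.map_map]; rfl
  have hcard : Multiset.card (univ.val.map a) = k - 1 := by
    simp
  have hcoeff : ∀ m : ℕ, m ≤ k - 1 →
      P.coeff m = (-1) ^ (k - 1 - m) *
        ∑ t ∈ (univ : Finset (Fin (k - 1))).powersetCard (k - 1 - m), ∏ i ∈ t, a i := by
    intro m hm
    rw [hPms, Multiset.prod_X_sub_C_coeff _ (by rw [hcard]; exact hm), hcard,
      Finset.esymm_map_val]
  have hProot : ∀ i, P.eval (a i) = 0 := by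
    intro i
    rw [hP_def, eval_prod]
    exact Finset.prod_eq_zero (Finset.mem_univ i) (by simp)
  set S1 : F := ∑ t ∈ (univ : Finset (Fin (k - 1))).powersetCard (r - 1), ∏ i ∈ t, a i with hS1
  set S2 : F := ∑ t ∈ (univ : Finset (Fin (k - 1))).powersetCard r, ∏ i ∈ t, a i with hS2
  have hc1 : P.coeff (k - r) = (-1) ^ (r - 1) * S1 := by
    have := hcoeff (k - r) (by omega)
    rwa [show k - 1 - (k - r) = r - 1 by omega] at this
  have hc2 : P.coeff (k - r - 1) = (-1) ^ r * S2 := by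
    have := hcoeff (k - r - 1) (by omega)
    rwa [show k - 1 - (k - r - 1) = r by omega] at this
  have hXP : ∀ m : ℕ, 1 ≤ m → (X * P).coeff m = P.coeff (m - 1) := by
    intro m hm
    conv_lhs => rw [show m = (m - 1) + 1 by omega]
    exact coeff_X_mul P (m - 1)
  -- the linear map Φ from coefficient vectors to polynomials
  set Φ : (Fin k → F) →ₗ[F] F[X] :=
    { toFun := fun c => ∑ j : Fin k, c j • (X : F[X]) ^ e j
      map_add' := by intro c d; simp [add_smul, Finset.sum_add_distrib]
      map_smul' := by intro t c; simp [smul_smul, Finset.smul_sum] } with hΦ_def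
  have hΦcoeff : ∀ (c : Fin k → F) (j : Fin k), (Φ c).coeff (e j) = c j := by
    intro c j
    simp only [hΦ_def, LinearMap.coe_mk, AddHom.coe_mk, finset_sum_coeff]
    rw [Finset.sum_eq_single j]
    · simp [coeff_X_pow]
    · intro b _ hb
      rw [coeff_smul, coeff_X_pow, if_neg (fun h => hb (he_inj h.symm)), smul_zero]
    · simp
  have hΦcoeff' : ∀ c : Fin k → F, (Φ c).coeff (k - r) = 0 := by
    intro c
    simp only [hΦ_def, LinearMap.coe_mk, AddHom.coe_mk, finset_sum_coeff]
    apply Finset.sum_eq_zero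
    intro j _
    rw [coeff_smul, coeff_X_pow, if_neg (fun h => (he_ne j) h.symm), smul_zero]
  have hΦdeg : ∀ c : Fin k → F, (Φ c).natDegree ≤ k := by
    intro c
    simp only [hΦ_def, LinearMap.coe_mk, AddHom.coe_mk]
    apply natDegree_sum_le_of_forall_le
    intro j _
    exact (natDegree_smul_le _ _).trans ((natDegree_X_pow_le _).trans (he_le j))
  have hΦeval : ∀ (c : Fin k → F) (i : Fin (k - 1)),
      (Φ c).eval (a i) = ∑ j : Fin k, c j * a i ^ e j := by
    intro c i
    simp [hΦ_def, eval_finset_sum]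
  set K := LinearMap.ker (Matrix.mulVecLin Gᵀ) with hK_def
  have hKmem : ∀ c : Fin k → F, c ∈ K ↔ ∀ i, (Φ c).eval (a i) = 0 := by
    intro c
    have hmv : ∀ i, Gᵀ.mulVec c i = (Φ c).eval (a i) := by
      intro i
      rw [hΦeval]
      simp only [Matrix.mulVec, dotProduct, Matrix.transpose_apply, hG]
      exact Finset.sum_congr rfl fun j _ => mul_comm _ _
    rw [LinearMap.mem_ker]
    constructor
    · intro h i; rw [← hmv i]; rw [Matrix.mulVecLin_apply] at h
      exact congrFun h i
    · intro h
      rw [Matrix.mulVecLin_apply]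
      funext i
      rw [hmv i, h i]; rfl
  -- the two coefficients
  set h₁ : F := P.coeff (k - r) with hh₁
  set h₂ : F := P.coeff (k - r - 1) with hh₂
  -- T : pairs to coefficient vectors
  set T : (F × F) →ₗ[F] (Fin k → F) :=
    { toFun := fun p j => p.1 * P.coeff (e j) + p.2 * (X * P).coeff (e j)
      map_add' := by intro p q; funext j; simp; ring
      map_smul' := by intro t p; funext j; simp; ring } with hT_def
  set f : (F × F) →ₗ[F] F :=
    { toFun := fun p => p.1 * h₁ + p.2 * h₂
      map_add' := by intro p q; simp; ring
      map_smul' := by intro t p; simp; ring } with hf_def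
  have hTpoly : ∀ p : F × F, p ∈ LinearMap.ker f →
      Φ (T p) = C p.1 * P + C p.2 * (X * P) := by
    intro p hp
    rw [LinearMap.mem_ker] at hp
    simp only [hf_def, LinearMap.coe_mk, AddHom.coe_mk] at hp
    apply Polynomial.ext
    intro m
    have hRHS : ∀ m : ℕ, (C p.1 * P + C p.2 * (X * P)).coeff m
        = p.1 * P.coeff m + p.2 * (X * P).coeff m := by
      intro m; simp [coeff_C_mul]
    rcases lt_or_ge k m with hmk | hmk
    · rw [coeff_eq_zero_of_natDegree_lt (lt_of_le_of_lt (hΦdeg _) hmk)]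
      rw [coeff_eq_zero_of_natDegree_lt]
      apply lt_of_le_of_lt _ hmk
      apply (natDegree_add_le _ _).trans
      simp only [max_le_iff]
      constructor
      · exact (natDegree_C_mul_le _ _).trans (by omega)
      · exact (natDegree_C_mul_le _ _).trans ((natDegree_mul_le).trans (by simp [hPdeg]; omega))
    · by_cases hm : m = k - r
      · subst hm
        rw [hΦcoeff', hRHS, hXP _ (by omega)]
        rw [hh₁, hh₂] at hp
        linear_combination -hp
      · obtain ⟨j, hj⟩ := he_cover m hmk hm
        rw [← hj, hΦcoeff, hRHS]
        rfl
  have hTK : Submodule.map T (LinearMap.ker f) ≤ K := by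
    rintro _ ⟨p, hp, rfl⟩
    rw [hKmem]
    intro i
    rw [hTpoly p hp]
    simp [hProot i]
  have hKT : K ≤ Submodule.map T (LinearMap.ker f) := by
    intro c hc
    by_cases hc0 : c = 0
    · subst hc0; exact ⟨0, Submodule.zero_mem _, by simp⟩
    have hΦ0 : Φ c ≠ 0 := by
      intro h
      apply hc0
      funext j
      rw [← hΦcoeff c j, h, coeff_zero]; rfl
    have hdvd : P ∣ Φ c := by
      rw [hPms, Multiset.prod_X_sub_C_dvd_iff_le_roots hΦ0]
      rw [Multiset.le_iff_subset (Multiset.Nodup.map ha univ.nodup)]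
      intro x hx
      obtain ⟨i, _, rfl⟩ := Multiset.mem_map.mp hx
      rw [mem_roots hΦ0]
      exact (hKmem c).mp hc i
    obtain ⟨sq, hsq⟩ := hdvd
    have hsq0 : sq ≠ 0 := by rintro rfl; rw [mul_zero] at hsq; exact hΦ0 hsq
    have hsqdeg : sq.natDegree ≤ 1 := by
      have h1 := hΦdeg c
      rw [hsq, natDegree_mul hP0 hsq0, hPdeg] at h1
      omega
    set α := sq.coeff 0 with hα
    set β := sq.coeff 1 with hβ
    have hsq2 : Φ c = C α * P + C β * (X * P) := by
      rw [hsq, eq_X_add_C_of_natDegree_le_one hsqdeg]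
      ring
    have hker : (α, β) ∈ LinearMap.ker f := by
      rw [LinearMap.mem_ker]
      simp only [hf_def, LinearMap.coe_mk, AddHom.coe_mk]
      have := hΦcoeff' c
      rw [hsq2] at this
      simp only [coeff_add, coeff_C_mul] at this
      rw [hh₁, hh₂, ← hXP _ (by omega : 1 ≤ k - r)]
      exact this
    refine ⟨(α, β), hker, ?_⟩
    funext j
    simp only [hT_def, LinearMap.coe_mk, AddHom.coe_mk]
    rw [← hΦcoeff c j, hsq2]
    simp [coeff_C_mul]
  have hKeq : K = Submodule.map T (LinearMap.ker f) := le_antisymm hKT hTK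
  -- T is injective
  have hTinj : Function.Injective T := by
    rw [← LinearMap.ker_eq_bot]
    rw [LinearMap.ker_eq_bot']
    intro p hp
    obtain ⟨j₁, hj₁⟩ := he_cover k le_rfl (by omega)
    obtain ⟨j₂, hj₂⟩ := he_cover (k - 1) (by omega) (by omega)
    have e₁ := congrFun hp j₁
    have e₂ := congrFun hp j₂
    simp only [hT_def, LinearMap.coe_mk, AddHom.coe_mk, Pi.zero_apply, hj₁, hj₂] at e₁ e₂
    rw [coeff_eq_zero_of_natDegree_lt (by omega : P.natDegree < k),
      hXP _ (by omega), show k - 1 = P.natDegree by omega, hPm.coeff_natDegree] at e₁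
    rw [hXP _ (by omega)] at e₂
    have hβ0 : p.2 = 0 := by
      rw [mul_zero, zero_add, mul_one] at e₁; exact e₁
    rw [hβ0, zero_mul, add_zero, show k - 1 = P.natDegree by omega, hPm.coeff_natDegree,
      mul_one] at e₂
    have : p = (p.1, p.2) := rfl
    rw [this, e₂, hβ0]
    rfl
  have hKrank : finrank F K = finrank F (LinearMap.ker f) := by
    rw [hKeq]
    exact (Submodule.equivMapOfInjective T hTinj (LinearMap.ker f)).finrank_eq.symm
  -- rank-nullity for Gᵀ
  have hrn : Gᵀ.rank + finrank F K = k := by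
    have := LinearMap.finrank_range_add_finrank_ker (Matrix.mulVecLin Gᵀ)
    rw [Module.finrank_pi, Fintype.card_fin] at this
    exact this
  have hGrank : G.rank = Gᵀ.rank := (Matrix.rank_transpose G).symm
  -- kernel of f dimension
  have hfr2 : finrank F (F × F) = 2 := by simp
  have hcase : (finrank F (LinearMap.ker f) = 2 ∧ S1 = 0 ∧ S2 = 0) ∨
      (finrank F (LinearMap.ker f) = 1 ∧ ¬(S1 = 0 ∧ S2 = 0)) := by
    have hsign1 : h₁ = 0 ↔ S1 = 0 := by
      rw [hc1, mul_eq_zero]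
      simp [pow_ne_zero _ (show (-1:F) ≠ 0 by norm_num)]
    have hsign2 : h₂ = 0 ↔ S2 = 0 := by
      rw [hc2, mul_eq_zero]
      simp [pow_ne_zero _ (show (-1:F) ≠ 0 by norm_num)]
    by_cases hz : S1 = 0 ∧ S2 = 0
    · left
      refine ⟨?_, hz⟩
      have hf0 : f = 0 := by
        apply LinearMap.ext
        intro p
        simp only [hf_def, LinearMap.coe_mk, AddHom.coe_mk, hsign1.mpr hz.1, hsign2.mpr hz.2,
          LinearMap.zero_apply, mul_zero, add_zero]
      rw [hf0, LinearMap.ker_zero, finrank_top, hfr2]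
    · right
      refine ⟨?_, hz⟩
      have hf0 : f ≠ 0 := by
        intro h
        apply hz
        have h1 := congrFun (congrArg DFunLike.coe h) (1, 0)
        have h2 := congrFun (congrArg DFunLike.coe h) (0, 1)
        simp only [hf_def, LinearMap.coe_mk, AddHom.coe_mk, LinearMap.zero_apply,
          one_mul, zero_mul, add_zero, zero_add] at h1 h2
        exact ⟨hsign1.mp h1, hsign2.mp h2⟩
      have h3 := LinearMap.finrank_range_add_finrank_ker f
      rw [hfr2] at h3
      have hle : finrank F (LinearMap.range f) ≤ 1 := by
        have := Submodule.finrank_le (LinearMap.range f)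
        simpa using this
      have hge : 1 ≤ finrank F (LinearMap.range f) := by
        rcases Nat.eq_zero_or_pos (finrank F (LinearMap.range f)) with h | h
        · exfalso
          rw [Submodule.finrank_eq_zero, LinearMap.range_eq_bot] at h
          exact hf0 h
        · exact h
      omega
  rcases hcase with ⟨hdim, hz⟩ | ⟨hdim, hz⟩
  · rw [hKrank, hdim] at hrn
    constructor
    · omega
    · rw [hS1, hS2] at hz
      constructor
      · intro h; omega
      · intro h; exact absurd hz h
  · rw [hKrank, hdim] at hrn
    constructor
    · omega
    · rw [hS1, hS2] at hz
      constructor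
      · intro _; exact hz
      · intro _; omega
end

section
/- Let a_1,...,a_{k-1} ∈ F_q be pairwise distinct and 2 ≤ r ≤ k-1. There exists a monic polynomial f ∈ F_q[x] of degree at most k with coefficient of x^{k-r} equal to zero and vanishing at all of a_1,...,a_{k-1}; moreover this f is unique if and only if s_{k-1,r-1}(a_1,...,a_{k-1}) and s_{k-1,r}(a_1,...,a_{k-1}) are not both zero. -/
open Finset Polynomial

theorem monic_vanishing_poly_exists_unique_iff {F : Type*} [Field F] [Fintype F] {k r : ℕ}
    (hr1 : 2 ≤ r) (hr2 : r ≤ k - 1)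
    (a : Fin (k - 1) → F) (ha : Function.Injective a) :
    (∃ f : F[X], f.Monic ∧ f.natDegree ≤ k ∧ f.coeff (k - r) = 0 ∧ ∀ i, f.eval (a i) = 0) ∧
      ((∃! f : F[X],
          f.Monic ∧ f.natDegree ≤ k ∧ f.coeff (k - r) = 0 ∧ ∀ i, f.eval (a i) = 0) ↔
        ¬((∑ t ∈ (univ : Finset (Fin (k - 1))).powersetCard (r - 1), ∏ i ∈ t, a i) = 0 ∧
          (∑ t ∈ (univ : Finset (Fin (k - 1))).powersetCard r, ∏ i ∈ t, a i) = 0)) := by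
  have hk : 3 ≤ k := by omega
  set g : F[X] := ∏ i : Fin (k - 1), (X - C (a i)) with hg
  have hgmonic : g.Monic := monic_prod_of_monic _ _ fun i _ => monic_X_sub_C _
  have hgdeg : g.natDegree = k - 1 := by
    rw [hg, natDegree_prod_of_monic _ _ fun i _ => monic_X_sub_C _]
    simp
  set s1 := ∑ t ∈ (univ : Finset (Fin (k - 1))).powersetCard (r - 1), ∏ i ∈ t, a i with hs1
  set s2 := ∑ t ∈ (univ : Finset (Fin (k - 1))).powersetCard r, ∏ i ∈ t, a i with hs2
  have h1 : g = ((Finset.univ.val.map a).map fun t => X - C t).prod := by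
    rw [Multiset.map_map, hg, Finset.prod_eq_multiset_prod]
    rfl
  have hcard : Multiset.card (Finset.univ.val.map a) = k - 1 := by simp
  have hcoeff : ∀ m, m ≤ k - 1 → g.coeff m =
      (-1) ^ (k - 1 - m) *
        ∑ t ∈ (univ : Finset (Fin (k - 1))).powersetCard (k - 1 - m), ∏ i ∈ t, a i := by
    intro m hm
    rw [h1, Multiset.prod_X_sub_C_coeff _ (by rw [hcard]; exact hm), hcard,
      Finset.esymm_map_val]
  have e1 : g.coeff (k - r) = (-1) ^ (r - 1) * s1 := by
    have h := hcoeff (k - r) (by omega)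
    rwa [show k - 1 - (k - r) = r - 1 from by omega] at h
  have e2 : g.coeff (k - r - 1) = (-1) ^ r * s2 := by
    have h := hcoeff (k - r - 1) (by omega)
    rwa [show k - 1 - (k - r - 1) = r from by omega] at h
  have hneg : ((-1 : F)) ^ r = -(-1) ^ (r - 1) := by
    obtain ⟨m, rfl⟩ : ∃ m, r = m + 1 := ⟨r - 1, by omega⟩
    simp [pow_succ]
  have hb : ∀ b : F, (g * (X - C b)).coeff (k - r) = (-1) ^ r * (s2 + b * s1) := by
    intro b
    have hkr : k - r = (k - r - 1) + 1 := by omega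
    rw [mul_sub, coeff_sub, hkr, coeff_mul_X, ← hkr, coeff_mul_C, e2, e1]
    rw [hneg]; ring
  -- evaluation facts
  have hgeval : ∀ i, g.eval (a i) = 0 := by
    intro i
    rw [hg, eval_prod]
    exact Finset.prod_eq_zero (Finset.mem_univ i) (by simp)
  have hbdeg : ∀ b : F, (g * (X - C b)).natDegree = k := by
    intro b
    rw [hgmonic.natDegree_mul (monic_X_sub_C b), hgdeg, natDegree_X_sub_C]
    omega
  have hgOK : ∀ b : F, (g * (X - C b)).Monic ∧ (g * (X - C b)).natDegree ≤ k ∧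
      ∀ i, (g * (X - C b)).eval (a i) = 0 := by
    intro b
    exact ⟨hgmonic.mul (monic_X_sub_C b), le_of_eq (hbdeg b),
      fun i => by rw [eval_mul, hgeval i, zero_mul]⟩
  -- classification
  have hclass : ∀ f : F[X], f.Monic → f.natDegree ≤ k → (∀ i, f.eval (a i) = 0) →
      f = g ∨ ∃ b, f = g * (X - C b) := by
    intro f hf hdeg heval
    have hf0 : f ≠ 0 := hf.ne_zero
    have hdvd : g ∣ f := by
      rw [h1, Multiset.prod_X_sub_C_dvd_iff_le_roots hf0]
      refine (Multiset.le_iff_subset (Multiset.Nodup.map ha Finset.univ.nodup)).2 ?_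
      intro x hx
      obtain ⟨i, _, rfl⟩ := Multiset.mem_map.mp hx
      rw [mem_roots hf0]
      exact heval i
    obtain ⟨q, hq⟩ := hdvd
    have hqmonic : q.Monic := by
      have hm := hf; rw [hq] at hm
      exact hgmonic.of_mul_monic_left hm
    have hqdeg : q.natDegree ≤ 1 := by
      have hd : f.natDegree = g.natDegree + q.natDegree := by
        rw [hq, hgmonic.natDegree_mul hqmonic]
      omega
    rcases Nat.le_one_iff_eq_zero_or_eq_one.mp hqdeg with h0 | h1'
    · left
      rw [hq, (hqmonic.natDegree_eq_zero).mp h0, mul_one]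
    · right
      refine ⟨-(q.coeff 0), ?_⟩
      have hqe := eq_X_add_C_of_natDegree_le_one hqdeg
      have hc1 : q.coeff 1 = 1 := by
        have hm := hqmonic
        rwa [Monic, leadingCoeff, h1'] at hm
      rw [hc1, map_one, one_mul] at hqe
      rw [hq]
      congr 1
      rw [map_neg, sub_neg_eq_add]
      exact hqe
  have hr0 : (-1 : F) ^ r ≠ 0 := pow_ne_zero _ (neg_ne_zero.2 one_ne_zero)
  have hr0' : (-1 : F) ^ (r - 1) ≠ 0 := pow_ne_zero _ (neg_ne_zero.2 one_ne_zero)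
  constructor
  · by_cases h : s1 = 0
    · exact ⟨g, hgmonic, by omega, by rw [e1, h, mul_zero], hgeval⟩
    · refine ⟨g * (X - C (-s2 / s1)), (hgOK _).1, (hgOK _).2.1, ?_, (hgOK _).2.2⟩
      rw [hb, div_mul_cancel₀ _ h]
      ring
  · constructor
    · rintro ⟨f, hfP, hfuniq⟩ ⟨h1z, h2z⟩
      have hA := hfuniq g ⟨hgmonic, by omega, by rw [e1, h1z, mul_zero], hgeval⟩
      have hB := hfuniq (g * (X - C 0))
        ⟨(hgOK 0).1, (hgOK 0).2.1, by rw [hb, h1z, h2z]; ring, (hgOK 0).2.2⟩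
      have hgb : g = g * (X - C 0) := hA.trans hB.symm
      have := congrArg natDegree hgb
      rw [hgdeg, hbdeg 0] at this
      omega
    · intro hnot
      by_cases hz : s1 = 0
      · have hs2 : s2 ≠ 0 := fun h => hnot ⟨hz, h⟩
        refine ⟨g, ⟨hgmonic, by omega, by rw [e1, hz, mul_zero], hgeval⟩, ?_⟩
        rintro f ⟨hfm, hfd, hfc, hfe⟩
        rcases hclass f hfm hfd hfe with h | ⟨b, hbb⟩
        · exact h
        · exfalso
          rw [hbb, hb, hz, mul_zero, add_zero] at hfc
          exact hs2 ((mul_eq_zero.mp hfc).resolve_left hr0)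
      · refine ⟨g * (X - C (-s2 / s1)),
          ⟨(hgOK _).1, (hgOK _).2.1, by rw [hb, div_mul_cancel₀ _ hz]; ring, (hgOK _).2.2⟩, ?_⟩
        rintro f ⟨hfm, hfd, hfc, hfe⟩
        rcases hclass f hfm hfd hfe with h | ⟨b, hbb⟩
        · exfalso
          rw [h, e1] at hfc
          exact hz ((mul_eq_zero.mp hfc).resolve_left hr0')
        · rw [hbb, hb] at hfc
          have h2 : s2 + b * s1 = 0 := (mul_eq_zero.mp hfc).resolve_left hr0
          have hbe : b = -s2 / s1 := by rw [eq_div_iff hz]; linear_combination h2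
          rw [hbb, hbe]
end

section
/- Let a_1,...,a_n ∈ F_q be pairwise distinct, 1 ≤ k ≤ n-1, 1 ≤ r ≤ k-1. The extended code GRS_{k,r}(a,v,∞) has minimum distance at least n-k+1 (so it is AMDS or MDS); and it is not MDS if and only if there exists a (k-1)-subset Z_1 of {a_1,...,a_n} with s_{r-1}(Z_1) = 0 or a k-subset Z_2 with s_r(Z_2) = 0. -/
open Finset Polynomial

/-- The subcode `GRS_{k,r}(a,v,∞)` of the extended GRS code, of length `n+1`. -/
def GRSsubExt {F : Type*} [Field F] (n k r : ℕ) (a v : Fin n → F) : Set (Fin (n + 1) → F) :=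
  {c | ∃ f : F[X], f.natDegree ≤ k ∧ f.coeff (k - r) = 0 ∧
    (∀ i : Fin n, c i.castSucc = v i * f.eval (a i)) ∧ c (Fin.last n) = f.coeff k}

/-- Hamming weight. -/
def wt {F : Type*} [DecidableEq F] [Zero F] {m : ℕ} (c : Fin m → F) : ℕ :=
  (Finset.univ.filter fun i => c i ≠ 0).card

/-- Elementary symmetric value of degree `d` of a finite set of field elements. -/
def esymmSet {F : Type*} [CommRing F] (Z : Finset F) (d : ℕ) : F :=
  ∑ t ∈ Z.powersetCard d, ∏ x ∈ t, x

lemma esymmSet_eq_esymm {F : Type*} [CommRing F] (Z : Finset F) (d : ℕ) :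
    esymmSet Z d = Z.val.esymm d := by
  simpa [esymmSet] using (Finset.esymm_map_val (id : F → F) Z d).symm

lemma wt_eq_split {F : Type*} [DecidableEq F] [Zero F] {n : ℕ} (c : Fin (n + 1) → F) :
    wt c = (Finset.univ.filter fun i : Fin n => c i.castSucc ≠ 0).card
      + (if c (Fin.last n) ≠ 0 then 1 else 0) := by
  unfold wt
  rw [Fin.univ_castSuccEmb, filter_cons]
  have hcomp : (Finset.univ.filter ((fun i : Fin (n+1) => ¬c i = 0) ∘ Fin.castSuccEmb)).card
      = (Finset.univ.filter fun i : Fin n => ¬c i.castSucc = 0).card := by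
    congr 1
  by_cases h : c (Fin.last n) ≠ 0
  · rw [if_pos h, Finset.card_cons, Finset.filter_map, Finset.card_map, if_pos h, hcomp]
  · rw [if_neg h, Finset.filter_map, Finset.card_map, if_neg h, add_zero, hcomp]

lemma card_eval_zero_le {F : Type*} [Field F] [DecidableEq F] {n : ℕ} {a : Fin n → F}
    (ha : Function.Injective a) {f : F[X]} (hf : f ≠ 0) :
    (Finset.univ.filter fun i => f.eval (a i) = 0).card ≤ f.natDegree := by
  classical
  have h1 : ((Finset.univ.filter fun i => f.eval (a i) = 0).image a) ⊆ f.roots.toFinset := by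
    intro x hx
    simp only [Finset.mem_image, Finset.mem_filter] at hx
    obtain ⟨i, ⟨_, hi⟩, rfl⟩ := hx
    simp [Multiset.mem_toFinset, mem_roots, hf, IsRoot, hi]
  calc (Finset.univ.filter fun i => f.eval (a i) = 0).card
      = ((Finset.univ.filter fun i => f.eval (a i) = 0).image a).card :=
        (Finset.card_image_of_injective _ ha).symm
    _ ≤ f.roots.toFinset.card := Finset.card_le_card h1
    _ ≤ Multiset.card f.roots := Multiset.toFinset_card_le _
    _ ≤ f.natDegree := f.card_roots'

lemma roots_eq_of_card {F : Type*} [Field F] [DecidableEq F] {f : F[X]} (hf : f ≠ 0)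
    {S : Finset F} (hroot : ∀ z ∈ S, f.eval z = 0) (hdeg : f.natDegree ≤ S.card) :
    f.roots = S.val ∧ f.natDegree = S.card := by
  have hle : S.val ≤ f.roots := by
    rw [Multiset.le_iff_count]
    intro z
    by_cases hz : z ∈ S
    · rw [Multiset.count_eq_one_of_mem S.nodup hz]
      exact Multiset.count_pos.mpr ((mem_roots hf).mpr (hroot z hz))
    · simp [Multiset.count_eq_zero_of_notMem, hz]
  have hcard : Multiset.card f.roots ≤ S.card := le_trans f.card_roots' hdeg
  have heq : f.roots = S.val := (Multiset.eq_of_le_of_card_le hle (by simpa using hcard)).symm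
  refine ⟨heq, le_antisymm hdeg ?_⟩
  calc S.card = Multiset.card f.roots := by rw [heq]; rfl
    _ ≤ f.natDegree := f.card_roots'

lemma card_filter_mem {F : Type*} [DecidableEq F] {n : ℕ} {a : Fin n → F}
    (ha : Function.Injective a) {Z : Finset F} (hZ : Z ⊆ Finset.univ.image a) :
    (Finset.univ.filter fun i => a i ∈ Z).card = Z.card := by
  rw [← Finset.card_image_of_injective (Finset.univ.filter fun i => a i ∈ Z) ha]
  congr 1
  ext z
  simp only [Finset.mem_image, Finset.mem_filter, Finset.mem_univ, true_and]
  constructor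
  · rintro ⟨i, hi, rfl⟩; exact hi
  · intro hz
    obtain ⟨i, _, rfl⟩ := Finset.mem_image.mp (hZ hz)
    exact ⟨i, hz, rfl⟩
lemma construct_codeword {F : Type*} [Field F] [Fintype F] [DecidableEq F] {n k r : ℕ}
    (hrk : r + 1 ≤ k) (hr1 : 1 ≤ r) (hkn : k + 1 ≤ n)
    (a v : Fin n → F) (ha : Function.Injective a) (hv : ∀ i, v i ≠ 0)
    (Z : Finset F) (hZsub : Z ⊆ Finset.univ.image a)
    (hZk : Z.card = k - 1 ∨ Z.card = k)
    (hes : esymmSet Z (Z.card - (k - r)) = 0) :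
    ∃ c ∈ GRSsubExt n k r a v, c ≠ 0 ∧ wt c < n - k + 2 := by
  classical
  set f : F[X] := ∏ z ∈ Z, (X - C z) with hf
  have hmonic : f.Monic := monic_prod_of_monic _ _ fun z _ => monic_X_sub_C z
  have hfdeg : f.natDegree = Z.card := by
    rw [hf, natDegree_prod_of_monic _ _ fun z _ => monic_X_sub_C z]
    simp
  have hfdegk : f.natDegree ≤ k := by rw [hfdeg]; omega
  have heval : ∀ x, f.eval x = 0 ↔ x ∈ Z := by
    intro x
    rw [hf]
    simp only [eval_prod, eval_sub, eval_X, eval_C, Finset.prod_eq_zero_iff, sub_eq_zero]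
    constructor
    · rintro ⟨z, hz, rfl⟩; exact hz
    · intro hx; exact ⟨x, hx, rfl⟩
  have hcardval : Multiset.card Z.val = Z.card := rfl
  have hcoeffkr : f.coeff (k - r) = 0 := by
    rw [hf, Finset.prod_eq_multiset_prod,
      Multiset.prod_X_sub_C_coeff _ (show k - r ≤ Multiset.card Z.val by rw [hcardval]; omega)]
    have h0 : Z.val.esymm (Multiset.card Z.val - (k - r)) = 0 := by
      rw [← esymmSet_eq_esymm, hcardval]; exact hes
    rw [h0, mul_zero]
  set c : Fin (n + 1) → F := Fin.snoc (fun i => v i * f.eval (a i)) (f.coeff k) with hc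
  have hmem : c ∈ GRSsubExt n k r a v :=
    ⟨f, hfdegk, hcoeffkr, fun i => by simp [hc, Fin.snoc_castSucc], by simp [hc, Fin.snoc_last]⟩
  have hfilter : (Finset.univ.filter fun i : Fin n => c i.castSucc ≠ 0)
      = Finset.univ.filter fun i => ¬ a i ∈ Z := by
    apply Finset.filter_congr; intro i _
    simp only [hc, Fin.snoc_castSucc, ne_eq, mul_eq_zero, hv i, false_or, heval (a i)]
  have h1 := card_filter_mem ha hZsub
  have h2 := Finset.card_filter_add_card_filter_not
    (s := (Finset.univ : Finset (Fin n))) (p := fun i => a i ∈ Z)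
  rw [Finset.card_univ, Fintype.card_fin] at h2
  have hNcard : (Finset.univ.filter fun i : Fin n => ¬ a i ∈ Z).card = n - Z.card := by omega
  have hwt : wt c = (n - Z.card) + (if c (Fin.last n) ≠ 0 then 1 else 0) := by
    rw [wt_eq_split, hfilter, hNcard]
  rcases hZk with hZk | hZk
  · have hck : f.coeff k = 0 := coeff_eq_zero_of_natDegree_lt (by omega)
    have hlast : c (Fin.last n) = 0 := by simp [hc, Fin.snoc_last, hck]
    obtain ⟨i, hi⟩ : ∃ i, ¬ a i ∈ Z := by
      by_contra h
      push_neg at h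
      have : (Finset.univ.filter fun i => a i ∈ Z) = Finset.univ :=
        Finset.filter_true_of_mem fun i _ => h i
      rw [this, Finset.card_univ, Fintype.card_fin] at h1
      omega
    refine ⟨c, hmem, ?_, ?_⟩
    · intro h0
      have := congrFun h0 (Fin.castSucc i)
      simp only [hc, Fin.snoc_castSucc, Pi.zero_apply, mul_eq_zero] at this
      rcases this with h | h
      · exact hv i h
      · exact hi ((heval (a i)).mp h)
    · rw [hwt, hlast, if_neg (show ¬ (0:F) ≠ 0 from fun h => h rfl)]
      omega
  · have hck : f.coeff k = 1 := by
      have h := hmonic.coeff_natDegree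
      rwa [hfdeg, hZk] at h
    have hlast : c (Fin.last n) = 1 := by simp [hc, Fin.snoc_last, hck]
    refine ⟨c, hmem, ?_, ?_⟩
    · intro h0
      have := congrFun h0 (Fin.last n)
      rw [hlast] at this
      simp at this
    · rw [hwt, hlast]
      simp only [ne_eq, one_ne_zero, not_false_eq_true, if_pos]
      omega

lemma codeword_anatomy {F : Type*} [Field F] [Fintype F] [DecidableEq F] {n k : ℕ}
    (hk1 : 1 ≤ k)
    (a v : Fin n → F) (ha : Function.Injective a) (hv : ∀ i, v i ≠ 0)
    {c : Fin (n + 1) → F} (hc0 : c ≠ 0)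
    {f : F[X]} (hdeg : f.natDegree ≤ k)
    (hci : ∀ i : Fin n, c i.castSucc = v i * f.eval (a i))
    (hclast : c (Fin.last n) = f.coeff k) :
    f ≠ 0 ∧ (Finset.univ.filter fun i => f.eval (a i) = 0).card ≤ f.natDegree ∧
      wt c = (n - (Finset.univ.filter fun i => f.eval (a i) = 0).card)
        + (if f.coeff k ≠ 0 then 1 else 0) ∧
      (f.coeff k = 0 → f.natDegree + 1 ≤ k) := by
  classical
  have hf0 : f ≠ 0 := by
    rintro rfl
    apply hc0
    funext j
    refine Fin.lastCases ?_ ?_ j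
    · simpa using hclast
    · intro i; simpa using hci i
  have hZle := card_eval_zero_le ha hf0
  have h2 := Finset.card_filter_add_card_filter_not
    (s := (Finset.univ : Finset (Fin n))) (p := fun i => f.eval (a i) = 0)
  rw [Finset.card_univ, Fintype.card_fin] at h2
  have hfilter : (Finset.univ.filter fun i : Fin n => c i.castSucc ≠ 0)
      = Finset.univ.filter fun i => ¬ f.eval (a i) = 0 := by
    apply Finset.filter_congr; intro i _
    simp only [hci i, ne_eq, mul_eq_zero, hv i, false_or]
  refine ⟨hf0, hZle, ?_, ?_⟩
  · rw [wt_eq_split, hfilter, hclast]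
    have : (Finset.univ.filter fun i : Fin n => ¬ f.eval (a i) = 0).card
        = n - (Finset.univ.filter fun i => f.eval (a i) = 0).card := by omega
    rw [this]
  · intro hck
    rcases lt_or_eq_of_le hdeg with h | h
    · omega
    · exfalso
      have hl : f.leadingCoeff ≠ 0 := leadingCoeff_ne_zero.mpr hf0
      rw [leadingCoeff, h] at hl
      exact hl hck

lemma coeff_esymm_zero {F : Type*} [Field F] [DecidableEq F] {f : F[X]} (hf0 : f ≠ 0)
    {S : Finset F} (hroots : f.roots = S.val) (hndeg : f.natDegree = S.card)
    {j : ℕ} (hj : j ≤ S.card) (hcz : f.coeff j = 0) : esymmSet S (S.card - j) = 0 := by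
  have hfeq := C_leadingCoeff_mul_prod_multiset_X_sub_C (p := f)
    (by rw [hroots, hndeg]; rfl)
  have hco : f.coeff j = f.leadingCoeff * ((-1) ^ (S.card - j) * S.val.esymm (S.card - j)) := by
    conv_lhs => rw [← hfeq]
    rw [coeff_C_mul, hroots,
      Multiset.prod_X_sub_C_coeff _ (show j ≤ Multiset.card S.val from hj)]
    rfl
  rw [hcz] at hco
  rcases mul_eq_zero.mp hco.symm with h | h
  · exact absurd h (leadingCoeff_ne_zero.mpr hf0)
  · rcases mul_eq_zero.mp h with h' | h'
    · exact absurd h' (pow_ne_zero _ (neg_ne_zero.mpr one_ne_zero))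
    · rw [esymmSet_eq_esymm]; exact h'

theorem GRSsubExt_min_dist {F : Type*} [Field F] [Fintype F] [DecidableEq F] {n k r : ℕ}
    (hk1 : 1 ≤ k) (hk2 : k ≤ n - 1) (hr1 : 1 ≤ r) (hr2 : r ≤ k - 1)
    (a v : Fin n → F) (ha : Function.Injective a) (hv : ∀ i, v i ≠ 0) :
    (∀ c ∈ GRSsubExt n k r a v, c ≠ 0 → n - k + 1 ≤ wt c) ∧
      ((∃ c ∈ GRSsubExt n k r a v, c ≠ 0 ∧ wt c < n - k + 2) ↔
        ((∃ Z ⊆ Finset.univ.image a, Z.card = k - 1 ∧ esymmSet Z (r - 1) = 0) ∨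
          (∃ Z ⊆ Finset.univ.image a, Z.card = k ∧ esymmSet Z r = 0))) := by
  classical
  have hrk : r + 1 ≤ k := by omega
  have hkn : k + 1 ≤ n := by omega
  constructor
  · rintro c ⟨f, hdeg, hckr, hci, hclast⟩ hc0
    obtain ⟨hf0, hZle, hwt, hdeg'⟩ := codeword_anatomy hk1 a v ha hv hc0 hdeg hci hclast
    rw [hwt]
    by_cases hck : f.coeff k = 0
    · have := hdeg' hck
      rw [if_neg (by simpa using hck)]
      omega
    · rw [if_pos hck]
      omega
  constructor
  · rintro ⟨c, ⟨f, hdeg, hckr, hci, hclast⟩, hc0, hwt2⟩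
    obtain ⟨hf0, hZle, hwt, hdeg'⟩ := codeword_anatomy hk1 a v ha hv hc0 hdeg hci hclast
    set Zi := Finset.univ.filter fun i => f.eval (a i) = 0 with hZi
    set S := Zi.image a with hS
    have hScard : S.card = Zi.card := Finset.card_image_of_injective _ ha
    have hSsub : S ⊆ Finset.univ.image a :=
      Finset.image_subset_image (Finset.subset_univ _)
    have hSroot : ∀ z ∈ S, f.eval z = 0 := by
      intro z hz
      obtain ⟨i, hi, rfl⟩ := Finset.mem_image.mp hz
      exact (Finset.mem_filter.mp hi).2
    by_cases hck : f.coeff k = 0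
    · left
      have hdk := hdeg' hck
      rw [hwt, if_neg (by simpa using hck)] at hwt2
      have hZcard : Zi.card = k - 1 := by omega
      obtain ⟨hroots, hndeg⟩ := roots_eq_of_card hf0 hSroot (by omega)
      refine ⟨S, hSsub, by omega, ?_⟩
      have := coeff_esymm_zero hf0 hroots hndeg
        (show k - r ≤ S.card by omega) hckr
      rwa [show S.card - (k - r) = r - 1 by omega] at this
    · right
      rw [hwt, if_pos hck] at hwt2
      have hZcard : Zi.card = k := by
        have : f.natDegree ≤ k := hdeg
        omega
      obtain ⟨hroots, hndeg⟩ := roots_eq_of_card hf0 hSroot (by omega)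
      refine ⟨S, hSsub, by omega, ?_⟩
      have := coeff_esymm_zero hf0 hroots hndeg
        (show k - r ≤ S.card by omega) hckr
      rwa [show S.card - (k - r) = r by omega] at this
  · rintro (⟨Z, hZsub, hZcard, hZes⟩ | ⟨Z, hZsub, hZcard, hZes⟩)
    · exact construct_codeword hrk hr1 hkn a v ha hv Z hZsub (Or.inl hZcard)
        (by rwa [show Z.card - (k - r) = r - 1 by omega])
    · exact construct_codeword hrk hr1 hkn a v ha hv Z hZsub (Or.inr hZcard)
        (by rwa [show Z.card - (k - r) = r by omega])
end

section
/- Let a_1,...,a_n ∈ F_q be pairwise distinct and 2 ≤ r ≤ k-1, k ≤ n-1. The minimum distance d⊥ of the dual code of GRS_{k,r}(a) satisfies d⊥ ≥ k if and only if for every (k-1)-subset A of {a_1,...,a_n}, the values s_{k-1,r-1}(A) and s_{k-1,r}(A) are not both zero. -/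
open Finset Polynomial

/-- The subcode `GRS_{k,r}(a)` (all-ones factors). -/
def GRSsub1 {F : Type*} [Field F] (n k r : ℕ) (a : Fin n → F) : Set (Fin n → F) :=
  {c | ∃ f : F[X], f.natDegree ≤ k ∧ f.coeff (k - r) = 0 ∧ ∀ i, c i = f.eval (a i)}

lemma coeff_prod_X_sub_C {F : Type*} [Field F] (A : Finset F) (d : ℕ) (hd : d ≤ A.card) :
    (∏ α ∈ A, (X - C α)).coeff (A.card - d) = (-1) ^ d * esymmSet A d := by
  have h := Multiset.prod_X_sub_C_coeff (A.val) (k := A.card - d)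
    (by rw [show Multiset.card A.val = A.card from rfl]; exact Nat.sub_le _ _)
  have hc : Multiset.card A.val = A.card := rfl
  rw [hc, Nat.sub_sub_self hd] at h
  have hm : (A.val.map fun t => X - C t).prod = ∏ α ∈ A, (X - C α) :=
    (Finset.prod_eq_multiset_prod _ _).symm
  rw [hm] at h
  rw [h]
  congr 1
  have := Finset.esymm_map_val (id : F → F) A d
  simp only [Multiset.map_id] at this
  rw [this]
  simp [esymmSet]

theorem dual_dist_ge_iff {F : Type*} [Field F] [Fintype F] [DecidableEq F] {n k r : ℕ}
    (hr1 : 2 ≤ r) (hr2 : r ≤ k - 1) (hk : k ≤ n - 1)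
    (a : Fin n → F) (ha : Function.Injective a) :
    (∀ w ∈ dualCode (GRSsub1 n k r a), w ≠ 0 → k ≤ wt w) ↔
      ∀ A ⊆ Finset.univ.image a, A.card = k - 1 →
        ¬(esymmSet A (r - 1) = 0 ∧ esymmSet A r = 0) := by
  constructor
  · intro hL
    intro A hAsub hAcard
    rintro ⟨he1, he2⟩
    have hk3 : 3 ≤ k := by omega
    set L : F[X] := ∏ α ∈ A, (X - C α) with hLdef
    have hLmonic : L.Monic := monic_prod_of_monic _ _ fun α _ => monic_X_sub_C α
    have hLdeg : L.natDegree = k - 1 := by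
      rw [hLdef, natDegree_prod _ _ (fun α _ => X_sub_C_ne_zero α)]
      simp [hAcard]
    have hc1 : L.coeff (k - r) = 0 := by
      have hv := coeff_prod_X_sub_C A (r - 1) (by omega)
      rw [hAcard, show k - 1 - (r - 1) = k - r by omega, he1, mul_zero] at hv
      exact hv
    have hc2 : L.coeff (k - r - 1) = 0 := by
      have hv := coeff_prod_X_sub_C A r (by omega)
      rw [hAcard, show k - 1 - r = k - r - 1 by omega, he2, mul_zero] at hv
      exact hv
    -- the space of polynomials of degree ≤ k
    set V : Submodule F F[X] := Polynomial.degreeLE F (k : ℕ) with hV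
    set T : V →ₗ[F] (↥A → F) :=
      LinearMap.pi (fun α => (Polynomial.leval (α : F)).comp V.subtype) with hT
    set ψ : V →ₗ[F] F := (Polynomial.lcoeff F (k - r)).comp V.subtype with hψ
    have hTapp : ∀ (f : V) (α : ↥A), T f α = (f : F[X]).eval (α : F) := fun f α => rfl
    have hψapp : ∀ f : V, ψ f = (f : F[X]).coeff (k - r) := fun f => rfl
    -- kernel inclusion
    have hker : LinearMap.ker T ≤ LinearMap.ker ψ := by
      intro f hf
      rw [LinearMap.mem_ker] at hf ⊢
      have hev : ∀ α ∈ A, (f : F[X]).eval α = 0 := by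
        intro α hα
        have := congrFun hf ⟨α, hα⟩
        simpa [hTapp] using this
      rw [hψapp]
      by_cases h0 : (f : F[X]) = 0
      · simp [h0]
      · -- L divides f
        have hroots : A.val ≤ (f : F[X]).roots := by
          rw [Multiset.le_iff_count]
          intro α
          rcases Finset.decidableMem α A with hα | hα
          · simp [Multiset.count_eq_zero_of_notMem (by exact hα)]
          · have h1 : A.val.count α = 1 := Multiset.count_eq_one_of_mem A.nodup hα
            rw [h1, Polynomial.count_roots]
            exact (Polynomial.rootMultiplicity_pos h0).mpr (hev α hα)
        have hdvd : L ∣ (f : F[X]) := by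
          have h1 : (A.val.map fun α => X - C α).prod ∣
              ((f : F[X]).roots.map fun α => X - C α).prod :=
            Multiset.prod_dvd_prod_of_le (Multiset.map_le_map hroots)
          have h2 := Polynomial.prod_multiset_X_sub_C_dvd (f : F[X])
          rw [hLdef, Finset.prod_eq_multiset_prod]
          exact dvd_trans h1 h2
        obtain ⟨g, hg⟩ := hdvd
        have hg0 : g ≠ 0 := by rintro rfl; rw [mul_zero] at hg; exact h0 hg
        have hfdeg : (f : F[X]).natDegree ≤ k :=
          Polynomial.natDegree_le_iff_degree_le.mpr (Polynomial.mem_degreeLE.mp f.2)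
        have hgdeg : g.natDegree ≤ 1 := by
          have := Polynomial.natDegree_mul hLmonic.ne_zero hg0
          rw [← hg] at this
          omega
        have hgform := Polynomial.eq_X_add_C_of_degree_le_one
          (Polynomial.degree_le_of_natDegree_le (n := 1) hgdeg)
        rw [hg, hgform]
        have : L * (C (g.coeff 1) * X + C (g.coeff 0))
            = C (g.coeff 1) * (L * X) + C (g.coeff 0) * L := by ring
        rw [this, Polynomial.coeff_add, Polynomial.coeff_C_mul, Polynomial.coeff_C_mul,
          show k - r = (k - r - 1) + 1 by omega, Polynomial.coeff_mul_X]
        rw [hc2, show k - r - 1 + 1 = k - r from by omega, hc1]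
        ring
    -- factor ψ through T
    set ψ' : (V ⧸ LinearMap.ker T) →ₗ[F] F := (LinearMap.ker T).liftQ ψ hker with hψ'
    set e := T.quotKerEquivRange with he
    obtain ⟨φ, hφ⟩ := LinearMap.exists_extend (ψ'.comp e.symm.toLinearMap)
    have hfact : ∀ f : V, φ (T f) = ψ f := by
      intro f
      have hmem : T f ∈ LinearMap.range T := ⟨f, rfl⟩
      have h1 : T f = (LinearMap.range T).subtype ⟨T f, hmem⟩ := rfl
      rw [h1, ← LinearMap.comp_apply, hφ, LinearMap.comp_apply]
      have h2 : (e.symm ⟨T f, hmem⟩ : V ⧸ LinearMap.ker T) = Submodule.Quotient.mk f := by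
        apply e.injective
        simp [he]
      rw [LinearEquiv.coe_coe, h2]
      exact Submodule.liftQ_apply _ _ _
    -- the dual word
    classical
    set wA : ↥A → F := fun α => φ (fun β => if α = β then 1 else 0) with hwA
    have hφsum : ∀ v : ↥A → F, φ v = ∑ α : ↥A, v α * wA α := by
      intro v
      rw [LinearMap.pi_apply_eq_sum_univ φ v]
      exact Finset.sum_congr rfl fun α _ => by rw [smul_eq_mul, hwA]
    set w : Fin n → F := fun i => if h : a i ∈ A then wA ⟨a i, h⟩ else 0 with hw
    -- the key summation identity
    have hsum : ∀ f : V, ∑ i, w i * (f : F[X]).eval (a i) = (f : F[X]).coeff (k - r) := by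
      intro f
      rw [← hψapp, ← hfact f, hφsum]
      rw [show (∑ i, w i * (f : F[X]).eval (a i))
          = ∑ i ∈ Finset.univ.filter (fun i => a i ∈ A), w i * (f : F[X]).eval (a i) from
        (Finset.sum_filter_of_ne (fun i _ hne => by
          by_contra hmem
          exact hne (by rw [hw]; simp [hmem]))).symm]
      refine Finset.sum_bij (fun i hi => (⟨a i, (Finset.mem_filter.mp hi).2⟩ : ↥A))
        (fun i _ => Finset.mem_univ _) ?_ ?_ ?_
      · intro i hi j hj hij
        exact ha (congrArg Subtype.val hij)
      · intro α _
        obtain ⟨i, _, hai⟩ := Finset.mem_image.mp (hAsub α.2)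
        exact ⟨i, Finset.mem_filter.mpr ⟨Finset.mem_univ _, hai ▸ α.2⟩, Subtype.ext hai⟩
      · intro i hi
        have hmem := (Finset.mem_filter.mp hi).2
        rw [hw]
        simp only [hmem, dif_pos]
        rw [hTapp]
        ring
    -- w is in the dual code
    have hdual : w ∈ dualCode (GRSsub1 n k r a) := by
      rintro c ⟨f, hdeg, h0, hcf⟩
      have hfV : f ∈ V := Polynomial.mem_degreeLE.mpr
        (le_trans (Polynomial.degree_le_natDegree) (by exact_mod_cast hdeg))
      have := hsum ⟨f, hfV⟩
      simp only at this
      rw [show (∑ i, w i * c i) = ∑ i, w i * f.eval (a i) from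
        Finset.sum_congr rfl fun i _ => by rw [hcf i]]
      rw [this, h0]
    -- w is nonzero
    have hwne : w ≠ 0 := by
      have hXV : (X ^ (k - r) : F[X]) ∈ V := Polynomial.mem_degreeLE.mpr
        (le_trans (Polynomial.degree_X_pow_le _) (by exact_mod_cast (by omega : k - r ≤ k)))
      have h1 := hsum ⟨X ^ (k - r), hXV⟩
      simp only [Polynomial.coeff_X_pow, if_pos rfl] at h1
      intro h0
      rw [h0] at h1
      simp at h1
    -- weight bound
    have hwt : wt w < k := by
      have hsub : (Finset.univ.filter fun i => w i ≠ 0) ⊆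
          Finset.univ.filter fun i => a i ∈ A := by
        intro i hi
        rw [Finset.mem_filter] at hi ⊢
        refine ⟨Finset.mem_univ _, ?_⟩
        by_contra hmem
        exact hi.2 (by rw [hw]; simp [hmem])
      have hcard : (Finset.univ.filter fun i => a i ∈ A).card ≤ A.card := by
        refine Finset.card_le_card_of_injOn a ?_ (Function.Injective.injOn ha)
        intro i hi
        exact (Finset.mem_filter.mp hi).2
      calc wt w ≤ (Finset.univ.filter fun i => a i ∈ A).card := Finset.card_le_card hsub
        _ ≤ A.card := hcard
        _ = k - 1 := hAcard
        _ < k := by omega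
    exact absurd (hL w hdual hwne) (by omega)
  · intro hR
    intro w hw hwne
    by_contra hlt
    push_neg at hlt
    have hk3 : 3 ≤ k := by omega
    have hn : k + 1 ≤ n := by omega
    -- enlarge support
    obtain ⟨S, hS₀S, hScard⟩ := Finset.exists_superset_card_eq
      (s := Finset.univ.filter fun i => w i ≠ 0) (n := k - 1)
      (by simpa [wt] using Nat.le_of_lt_succ (by omega : wt w < (k-1)+1))
      (by simp; omega)
    have hsupp : ∀ i, w i ≠ 0 → i ∈ S := fun i hi => hS₀S (by simp [hi])
    set A : Finset F := S.image a with hA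
    have hAcard : A.card = k - 1 := by rw [hA, Finset.card_image_of_injective _ ha, hScard]
    have hAsub : A ⊆ Finset.univ.image a := Finset.image_subset_image (Finset.subset_univ S)
    -- step 1 : monomial tests
    have step1 : ∀ j, j ≤ k → j ≠ k - r → ∑ i, w i * (a i) ^ j = 0 := by
      intro j hj hne
      have := hw (fun i => (a i) ^ j) ⟨X ^ j, by simpa using hj,
        by simp [coeff_X_pow]; intro h; exact absurd h.symm hne, fun i => by simp⟩
      simpa using this
    set lam : F := ∑ i, w i * (a i) ^ (k - r) with hlam_def
    -- step 2 : general test polynomials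
    have step2 : ∀ f : F[X], f.natDegree ≤ k → ∑ i, w i * f.eval (a i) = lam * f.coeff (k - r) := by
      intro f hf
      have hev : ∀ x : F, f.eval x = ∑ j ∈ Finset.range (k+1), f.coeff j * x ^ j :=
        fun x => eval_eq_sum_range' (by omega) x
      calc ∑ i, w i * f.eval (a i)
          = ∑ i, ∑ j ∈ Finset.range (k+1), f.coeff j * (w i * (a i) ^ j) := by
            refine Finset.sum_congr rfl fun i _ => ?_
            rw [hev, Finset.mul_sum]; exact Finset.sum_congr rfl fun j _ => by ring
        _ = ∑ j ∈ Finset.range (k+1), f.coeff j * ∑ i, w i * (a i) ^ j := by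
            rw [Finset.sum_comm]
            exact Finset.sum_congr rfl fun j _ => by rw [Finset.mul_sum]
        _ = f.coeff (k - r) * lam := by
            rw [Finset.sum_eq_single (k - r)]
            · intro j hj hne
              rw [step1 j (by simpa using Nat.lt_succ_iff.mp (Finset.mem_range.mp hj)) hne, mul_zero]
            · intro h
              exact absurd (Finset.mem_range.mpr (by omega)) h
        _ = lam * f.coeff (k - r) := mul_comm _ _
    -- lambda nonzero
    have hlam : lam ≠ 0 := by
      intro h0
      obtain ⟨i0, hi0⟩ := Function.ne_iff.mp hwne
      simp only [Pi.zero_apply] at hi0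
      have hi0S : i0 ∈ S := hsupp i0 hi0
      set g : F[X] := ∏ i' ∈ S.erase i0, (X - C (a i')) with hg
      have hgdeg : g.natDegree ≤ k := by
        rw [hg, natDegree_prod _ _ (fun i' _ => X_sub_C_ne_zero (a i'))]
        simp [Finset.card_erase_of_mem hi0S, hScard]; omega
      have h := step2 g hgdeg
      rw [h0, zero_mul] at h
      rw [Finset.sum_eq_single i0 (fun i _ hne => ?_) (fun h' => absurd (Finset.mem_univ i0) h')] at h
      · have hge : g.eval (a i0) = ∏ i' ∈ S.erase i0, (a i0 - a i') := by
          rw [hg, eval_prod]; simp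
        rw [hge] at h
        rcases mul_eq_zero.mp h with h' | h'
        · exact hi0 h'
        · rw [Finset.prod_eq_zero_iff] at h'
          obtain ⟨i', hi', hz⟩ := h'
          exact (sub_ne_zero.mpr (fun he => (Finset.ne_of_mem_erase hi') (ha he.symm))) hz
      · by_cases hwi : w i = 0
        · rw [hwi, zero_mul]
        · have hiS : i ∈ S.erase i0 := Finset.mem_erase.mpr ⟨hne, hsupp i hwi⟩
          have : g.eval (a i) = 0 := by
            rw [hg, eval_prod]
            exact Finset.prod_eq_zero hiS (by simp)
          rw [this, mul_zero]
    -- final contradiction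
    refine hR A hAsub hAcard ⟨?_, ?_⟩
    all_goals {
      set L : F[X] := ∏ α ∈ A, (X - C α) with hL
      have hLmonic : L.Monic := monic_prod_of_monic _ _ fun α _ => monic_X_sub_C α
      have hLdeg : L.natDegree = k - 1 := by
        rw [hL, natDegree_prod _ _ (fun α _ => X_sub_C_ne_zero α)]
        simp [hAcard]
      have hLroot : ∀ i, w i ≠ 0 → L.eval (a i) = 0 := by
        intro i hi
        rw [hL, eval_prod]
        exact Finset.prod_eq_zero (Finset.mem_image_of_mem a (hsupp i hi)) (by simp)
      first
      | -- esymmSet A (r-1) = 0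
        (have h := step2 L (by omega)
         have hz : ∑ i, w i * L.eval (a i) = 0 := by
           refine Finset.sum_eq_zero fun i _ => ?_
           by_cases hwi : w i = 0
           · rw [hwi, zero_mul]
           · rw [hLroot i hwi, mul_zero]
         rw [hz] at h
         have hc : L.coeff (k - r) = 0 := by
           rcases mul_eq_zero.mp h.symm with h' | h'
           · exact absurd h' hlam
           · exact h'
         have hv := coeff_prod_X_sub_C A (r - 1) (by omega)
         rw [hAcard, show k - 1 - (r - 1) = k - r by omega, hc] at hv
         rcases mul_eq_zero.mp hv.symm with h' | h'
         · exact absurd h' (pow_ne_zero _ (neg_ne_zero.mpr one_ne_zero))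
         · exact h')
      | -- esymmSet A r = 0
        (have hLX : (L * X).natDegree ≤ k := by
           rw [natDegree_mul_X hLmonic.ne_zero]; omega
         have h := step2 (L * X) hLX
         have hz : ∑ i, w i * (L * X).eval (a i) = 0 := by
           refine Finset.sum_eq_zero fun i _ => ?_
           by_cases hwi : w i = 0
           · rw [hwi, zero_mul]
           · simp [hLroot i hwi]
         rw [hz] at h
         have hc : (L * X).coeff (k - r) = 0 := by
           rcases mul_eq_zero.mp h.symm with h' | h'
           · exact absurd h' hlam
           · exact h'
         rw [show k - r = (k - r - 1) + 1 by omega, coeff_mul_X] at hc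
         have hv := coeff_prod_X_sub_C A r (by omega)
         rw [hAcard, show k - 1 - r = k - r - 1 by omega, hc] at hv
         rcases mul_eq_zero.mp hv.symm with h' | h'
         · exact absurd h' (pow_ne_zero _ (neg_ne_zero.mpr one_ne_zero))
         · exact h')
    }
end

section
/- Let 2 ≤ k ≤ n-2, a_1,...,a_n ∈ F_q pairwise distinct, u_i = ∏_{j≠i}(a_j - a_i)^{-1}, and suppose ∑_i a_i = 0. Then the dual code of GRS_{k,1}(a) (with all-ones factors) equals GRS_{n-k,1}(a, u), i.e., the code {(u_1 g(a_1),...,u_n g(a_n)) : g ∈ F_q[x], deg g ≤ n-k, coefficient of x^{n-k-1} equals 0}. -/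
open Finset Polynomial

section Aux

variable {F : Type*} [Field F] {n : ℕ}

lemma GRS_coeff_interp (hn : 0 < n) (a : Fin n → F) (ha : Function.Injective a)
    (v : Fin n → F) :
    (Lagrange.interpolate univ a v).coeff (n - 1)
      = ∑ i, v i * Lagrange.nodalWeight univ a i := by
  rw [Lagrange.interpolate_apply, finset_sum_coeff]
  refine sum_congr rfl fun i _ => ?_
  have hbasis : Lagrange.basis univ a i
      = C (Lagrange.nodalWeight univ a i) * Lagrange.nodal (univ.erase i) a := by
    rw [Lagrange.basis_eq_prod_sub_inv_mul_nodal_div (mem_univ i),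
      ← Lagrange.nodal_erase_eq_nodal_div (mem_univ i)]
  have hcard : #(univ.erase i) = n - 1 := by
    rw [card_erase_of_mem (mem_univ i), card_univ, Fintype.card_fin]
  have hnd : (Lagrange.nodal (univ.erase i) a).natDegree = n - 1 := by
    rw [Lagrange.natDegree_nodal, hcard]
  have hcoe : (Lagrange.nodal (univ.erase i) a).coeff (n - 1) = 1 := by
    rw [← hnd]; exact Lagrange.nodal_monic.coeff_natDegree
  rw [hbasis, ← mul_assoc, ← C_mul, coeff_C_mul, hcoe, mul_one]

lemma GRS_Tlt (hn : 0 < n) (a : Fin n → F) (ha : Function.Injective a)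
    {m : ℕ} (hm : m < n - 1) :
    ∑ i, Lagrange.nodalWeight univ a i * a i ^ m = 0 := by
  have hX : (X ^ m : F[X]) = Lagrange.interpolate univ a fun i => a i ^ m := by
    have h1 : (X ^ m : F[X]).degree < (#(univ : Finset (Fin n)) : ℕ) := by
      rw [degree_X_pow, card_univ, Fintype.card_fin]
      exact_mod_cast (by omega : m < n)
    have := Lagrange.eq_interpolate (f := (X ^ m : F[X])) ha.injOn h1
    simpa [eval_pow] using this
  have h2 := GRS_coeff_interp hn a ha fun i => a i ^ m
  rw [← hX, coeff_X_pow, if_neg (by omega)] at h2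
  exact (sum_congr rfl fun i _ => mul_comm _ _).trans h2.symm

lemma GRS_Ttop (hn : 0 < n) (a : Fin n → F) (ha : Function.Injective a) :
    ∑ i, Lagrange.nodalWeight univ a i * a i ^ (n - 1) = 1 := by
  have hX : (X ^ (n - 1) : F[X]) = Lagrange.interpolate univ a fun i => a i ^ (n - 1) := by
    have h1 : (X ^ (n - 1) : F[X]).degree < (#(univ : Finset (Fin n)) : ℕ) := by
      rw [degree_X_pow, card_univ, Fintype.card_fin]
      exact_mod_cast (by omega : n - 1 < n)
    have := Lagrange.eq_interpolate (f := (X ^ (n - 1) : F[X])) ha.injOn h1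
    simpa [eval_pow] using this
  have h2 := GRS_coeff_interp hn a ha fun i => a i ^ (n - 1)
  rw [← hX, coeff_X_pow, if_pos rfl] at h2
  rw [(sum_congr rfl fun i _ => mul_comm _ _ : _ = ∑ i, a i ^ (n-1) * Lagrange.nodalWeight univ a i)]
  exact h2.symm

lemma GRS_Tn (hn : 0 < n) (a : Fin n → F) (ha : Function.Injective a) :
    ∑ i, Lagrange.nodalWeight univ a i * a i ^ n = ∑ i, a i := by
  set P : F[X] := X ^ n - Lagrange.nodal univ a with hP
  have hdegnodal : (Lagrange.nodal univ a).degree = (n : ℕ) := by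
    rw [Lagrange.degree_nodal, card_univ, Fintype.card_fin]
  have hdeg : P.degree < (#(univ : Finset (Fin n)) : ℕ) := by
    rw [card_univ, Fintype.card_fin]
    have h1 : P.degree < (X ^ n : F[X]).degree := by
      apply degree_sub_lt
      · rw [degree_X_pow, hdegnodal]
      · exact (monic_X_pow n).ne_zero
      · rw [leadingCoeff_X_pow]; exact Lagrange.nodal_monic.leadingCoeff.symm
    rwa [degree_X_pow] at h1
  have hval : ∀ i : Fin n, P.eval (a i) = a i ^ n := by
    intro i
    rw [hP, eval_sub, eval_pow, eval_X, Lagrange.eval_nodal_at_node (mem_univ i), sub_zero]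
  have hint : P = Lagrange.interpolate univ a fun i => a i ^ n := by
    have := Lagrange.eq_interpolate (f := P) ha.injOn hdeg
    exact this.trans (by rw [funext fun i => hval i])
  have h2 := GRS_coeff_interp hn a ha fun i => a i ^ n
  have hcoeP : P.coeff (n - 1) = ∑ i, a i := by
    rw [hP, coeff_sub, coeff_X_pow, if_neg (by omega)]
    have := prod_X_sub_C_coeff_card_pred (univ : Finset (Fin n)) a
      (by rw [card_univ, Fintype.card_fin]; omega)
    rw [Lagrange.nodal_eq]
    rw [card_univ, Fintype.card_fin] at this
    rw [this]; ring
  rw [← hint, hcoeP] at h2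
  rw [(sum_congr rfl fun i _ => mul_comm _ _ : _ = ∑ i, a i ^ n * Lagrange.nodalWeight univ a i)]
  exact h2.symm

lemma GRS_pairing (a u : Fin n → F) (g : F[X]) (j : ℕ) :
    ∑ i, u i * g.eval (a i) * a i ^ j
      = ∑ m ∈ Finset.range (g.natDegree + 1), g.coeff m * ∑ i, u i * a i ^ (m + j) := by
  simp_rw [eval_eq_sum_range, Finset.mul_sum, Finset.sum_mul]
  rw [Finset.sum_comm]
  refine sum_congr rfl fun m _ => sum_congr rfl fun i _ => ?_
  rw [pow_add]; ring

end Aux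

theorem dual_GRSsub_one {F : Type*} [Field F] [Fintype F] {n k : ℕ}
    (hk1 : 2 ≤ k) (hk2 : k ≤ n - 2)
    (a : Fin n → F) (ha : Function.Injective a)
    (u : Fin n → F) (hu : ∀ i, u i = ∏ j ∈ univ.erase i, (a j - a i)⁻¹)
    (ht : ∑ i, a i = 0) :
    dualCode (GRSsub n k 1 a (fun _ => 1)) = GRSsub n (n - k) 1 a u := by
  have hn : 4 ≤ n := by omega
  have hn0 : 0 < n := by omega
  set wgt := Lagrange.nodalWeight (univ : Finset (Fin n)) a with hwgt
  set ε : F := (-1 : F) ^ (n - 1) with hε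
  have hεne : ε ≠ 0 := pow_ne_zero _ (neg_ne_zero.mpr one_ne_zero)
  have hu' : ∀ i, u i = ε * wgt i := by
    intro i
    rw [hu i, hwgt, Lagrange.nodalWeight]
    have : ∀ j ∈ univ.erase i, (a j - a i)⁻¹ = (-1) * (a i - a j)⁻¹ := by
      intro j _
      rw [← neg_sub (a i) (a j), inv_neg]; ring
    rw [prod_congr rfl this, prod_mul_distrib, prod_const,
      card_erase_of_mem (mem_univ i), card_univ, Fintype.card_fin]
  have hune : ∀ i, u i ≠ 0 := by
    intro i
    rw [hu i]
    refine prod_ne_zero_iff.mpr fun j hj => inv_ne_zero (sub_ne_zero_of_ne fun h => ?_)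
    exact (mem_erase.mp hj).1 (ha h)
  -- key pairing identity
  have key : ∀ (g : F[X]) (j : ℕ), ∑ i, u i * g.eval (a i) * a i ^ j
      = ε * ∑ m ∈ Finset.range (g.natDegree + 1), g.coeff m * ∑ i, wgt i * a i ^ (m + j) := by
    intro g j
    rw [GRS_pairing a u g j, Finset.mul_sum]
    refine sum_congr rfl fun m _ => ?_
    have : ∑ i, u i * a i ^ (m + j) = ε * ∑ i, wgt i * a i ^ (m + j) := by
      rw [Finset.mul_sum]
      exact sum_congr rfl fun i _ => by rw [hu' i]; ring
    rw [this]; ring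
  have hTlt : ∀ {m : ℕ}, m < n - 1 → ∑ i, wgt i * a i ^ m = 0 :=
    fun hm => GRS_Tlt hn0 a ha hm
  have hTtop : ∑ i, wgt i * a i ^ (n - 1) = 1 := GRS_Ttop hn0 a ha
  have hTn : ∑ i, wgt i * a i ^ n = 0 := by rw [GRS_Tn hn0 a ha, ht]
  ext y
  constructor
  · -- dual ⊆ GRS
    intro hy
    set g : F[X] := Lagrange.interpolate univ a (fun i => y i / u i) with hg
    have hgdeg : g.natDegree ≤ n - 1 := by
      by_cases h0 : g = 0
      · rw [h0]; simp
      · have := Lagrange.degree_interpolate_lt (r := fun i => y i / u i) (ha.injOn : Set.InjOn a ↑(univ : Finset (Fin n)))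
        rw [card_univ, Fintype.card_fin] at this
        have := (natDegree_lt_iff_degree_lt h0).mpr this
        omega
    have hval : ∀ i, y i = u i * g.eval (a i) := by
      intro i
      rw [hg, Lagrange.eval_interpolate_at_node (r := fun i => y i / u i) (ha.injOn : Set.InjOn a ↑(univ : Finset (Fin n))) (mem_univ i)]
      rw [mul_comm, div_mul_cancel₀ _ (hune i)]
    have hmono : ∀ j, j ≤ k → j ≠ k - 1 → ∑ i, y i * a i ^ j = 0 := by
      intro j hj hj'
      have hmem : (fun i => (1 : F) * (X ^ j : F[X]).eval (a i)) ∈ GRSsub n k 1 a (fun _ => 1) := by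
        refine ⟨X ^ j, by simpa using hj, ?_, fun i => rfl⟩
        rw [coeff_X_pow, if_neg (fun h => hj' h.symm)]
      have := hy _ hmem
      simpa [eval_pow] using this
    have hpair : ∀ j, ∑ i, y i * a i ^ j
        = ε * ∑ m ∈ Finset.range (g.natDegree + 1), g.coeff m * ∑ i, wgt i * a i ^ (m + j) := by
      intro j
      rw [← key g j]
      exact sum_congr rfl fun i _ => by rw [hval i]
    have hg_high : ∀ j, j ≤ k - 2 → g.coeff (n - 1 - j) = 0 := by
      intro j
      induction j using Nat.strong_induction_on with
      | _ j IH =>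
        intro hj
        have h0 : ∑ i, y i * a i ^ j = 0 := hmono j (by omega) (by omega)
        rw [hpair j] at h0
        have h2 : ∑ m ∈ Finset.range (g.natDegree + 1),
            g.coeff m * ∑ i, wgt i * a i ^ (m + j) = g.coeff (n - 1 - j) := by
          rw [Finset.sum_eq_single (n - 1 - j)]
          · rw [show n - 1 - j + j = n - 1 by omega, hTtop, mul_one]
          · intro m hm hne
            have hm1 : m ≤ n - 1 := le_trans (Nat.lt_succ_iff.mp (Finset.mem_range.mp hm)) hgdeg
            rcases lt_trichotomy (m + j) (n - 1) with h | h | h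
            · rw [hTlt h, mul_zero]
            · exact absurd (by omega : m = n - 1 - j) hne
            · have := IH (n - 1 - m) (by omega) (by omega)
              rw [show n - 1 - (n - 1 - m) = m by omega] at this
              rw [this, zero_mul]
          · intro h
            have : g.natDegree < n - 1 - j := by
              by_contra hc
              exact h (Finset.mem_range.mpr (by omega))
            rw [coeff_eq_zero_of_natDegree_lt this, zero_mul]
        rw [h2] at h0
        exact (mul_eq_zero.mp h0).resolve_left hεne
    have hg_high' : ∀ m, n - k + 1 ≤ m → m ≤ n - 1 → g.coeff m = 0 := by
      intro m h1 h2
      have := hg_high (n - 1 - m) (by omega)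
      rwa [show n - 1 - (n - 1 - m) = m by omega] at this
    have hgk : g.coeff (n - k - 1) = 0 := by
      have h0 : ∑ i, y i * a i ^ k = 0 := hmono k le_rfl (by omega)
      rw [hpair k] at h0
      have h2 : ∑ m ∈ Finset.range (g.natDegree + 1),
          g.coeff m * ∑ i, wgt i * a i ^ (m + k) = g.coeff (n - k - 1) := by
        rw [Finset.sum_eq_single (n - k - 1)]
        · rw [show n - k - 1 + k = n - 1 by omega, hTtop, mul_one]
        · intro m hm hne
          have hm1 : m ≤ n - 1 := le_trans (Nat.lt_succ_iff.mp (Finset.mem_range.mp hm)) hgdeg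
          by_cases hlt : m + k < n - 1
          · rw [hTlt hlt, mul_zero]
          · by_cases heq : m + k = n
            · rw [show ∑ i, wgt i * a i ^ (m + k) = 0 by rw [heq]; exact hTn, mul_zero]
            · by_cases heq1 : m + k = n - 1
              · exact absurd (by omega : m = n - k - 1) hne
              · have : n - k + 1 ≤ m := by omega
                rw [hg_high' m this hm1, zero_mul]
        · intro h
          have : g.natDegree < n - k - 1 := by
            by_contra hc
            exact h (Finset.mem_range.mpr (by omega))
          rw [coeff_eq_zero_of_natDegree_lt this, zero_mul]
      rw [h2] at h0
      exact (mul_eq_zero.mp h0).resolve_left hεne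
    refine ⟨g, ?_, hgk, fun i => hval i⟩
    refine natDegree_le_iff_coeff_eq_zero.mpr fun N hN => ?_
    by_cases hN1 : N ≤ n - 1
    · exact hg_high' N (by omega) hN1
    · exact coeff_eq_zero_of_natDegree_lt (by omega)
  · -- GRS ⊆ dual
    rintro ⟨g, hgdeg, hgc, hgy⟩ c ⟨f, hfdeg, hfc, hfc'⟩
    have hstep : ∑ i, y i * c i = ∑ i, u i * (f * g).eval (a i) * a i ^ 0 := by
      refine sum_congr rfl fun i _ => ?_
      rw [hgy i, hfc' i, eval_mul, pow_zero]
      ring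
    rw [hstep, key (f * g) 0]
    have hdfg : (f * g).natDegree ≤ n := le_trans (natDegree_mul_le) (by omega)
    have hsum0 : ∑ m ∈ Finset.range ((f * g).natDegree + 1),
        (f * g).coeff m * ∑ i, wgt i * a i ^ (m + 0) = 0 := by
      refine Finset.sum_eq_zero fun m hm => ?_
      have hm1 : m ≤ n := le_trans (Nat.lt_succ_iff.mp (Finset.mem_range.mp hm)) hdfg
      simp only [add_zero]
      by_cases h1 : m < n - 1
      · rw [hTlt h1, mul_zero]
      · by_cases h2 : m = n - 1
        · have hcoefffg : (f * g).coeff (n - 1) = 0 := by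
            rw [coeff_mul]
            refine Finset.sum_eq_zero fun p hp => ?_
            have hps : p.1 + p.2 = n - 1 := Finset.HasAntidiagonal.mem_antidiagonal.mp hp
            rcases lt_trichotomy p.1 (k - 1) with hc | hc | hc
            · have : (n - k) < p.2 := by omega
              rw [coeff_eq_zero_of_natDegree_lt (by omega : g.natDegree < p.2), mul_zero]
            · rw [show p.1 = k - 1 from hc, hfc, zero_mul]
            · by_cases hck : p.1 = k
              · rw [show p.2 = n - k - 1 by omega, hgc, mul_zero]
              · rw [coeff_eq_zero_of_natDegree_lt (by omega : f.natDegree < p.1), zero_mul]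
          rw [h2, hcoefffg, zero_mul]
        · have h3 : m = n := by omega
          rw [h3, hTn, mul_zero]
    rw [hsum0, mul_zero]
end

section
/- Let 3 ≤ k ≤ n-2, a_1,...,a_n ∈ F_q pairwise distinct, u_i = ∏_{j≠i}(a_j - a_i)^{-1}, a^{(i)} the tuple deleting a_i, and suppose s_{n-1}(a_1,...,a_n) = 0. Then the dual code of GRS_{k,k-1}(a) equals GRS_{n-k,n-k-1}(a, w) where w_i = u_i s_{n-2}(a^{(i)}). -/
open Finset Polynomial

section Aux
variable {F : Type*} [Field F] {n k : ℕ}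

lemma coeff_prod_X_sub_C' {ι : Type*} (s : Finset ι) (f : ι → F) {k : ℕ}
    (h : k ≤ s.card) :
    (∏ i ∈ s, (X - C (f i))).coeff k
      = (-1) ^ (s.card - k) * ∑ t ∈ s.powersetCard (s.card - k), ∏ j ∈ t, f j := by
  have h2 : k ≤ Multiset.card (s.val.map f) := by simpa using h
  have h3 := Multiset.prod_X_sub_C_coeff (s.val.map f) h2
  rw [Multiset.map_map] at h3
  simp only [Multiset.card_map] at h3
  rw [Finset.esymm_map_val] at h3
  exact h3

lemma modByMonic_coeff_one' {P m : F[X]} (hP : P.Monic)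
    (hdeg : P.natDegree = n) (hn : 2 ≤ n) (hm : ∀ d, n + 1 < d → m.coeff d = 0)
    (hP1 : P.coeff 1 = 0) :
    (m %ₘ P).coeff 1 = m.coeff 1 - m.coeff (n + 1) * P.coeff 0 := by
  set α := m.coeff (n + 1) with hα
  set β := m.coeff n - α * P.coeff (n - 1) with hβ
  set q : F[X] := C α * X + C β with hq
  set r : F[X] := m - P * q with hr
  have hPq : ∀ d : ℕ, (P * q).coeff (d + 1) = α * P.coeff d + β * P.coeff (d + 1) := by
    intro d
    rw [hq, mul_add, coeff_add, show P * (C α * X) = C α * (X * P) by ring, coeff_C_mul,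
      coeff_X_mul, show P * C β = C β * P by ring, coeff_C_mul]
  have hPn : P.coeff n = 1 := by rw [← hdeg]; exact hP.coeff_natDegree
  have hPhigh : ∀ d, n < d → P.coeff d = 0 := fun d hd =>
    coeff_eq_zero_of_natDegree_lt (by omega)
  have hrd : r.degree < P.degree := by
    rw [degree_eq_natDegree hP.ne_zero, hdeg]
    rw [degree_lt_iff_coeff_zero]
    intro e he
    have hcase : e = n ∨ e = n + 1 ∨ n + 1 < e := by
      exact_mod_cast by omega
    rw [hr, coeff_sub]
    rcases hcase with hc | hc | hc
    · rw [hc, show n = (n - 1) + 1 by omega, hPq (n - 1), show n - 1 + 1 = n by omega, hPn]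
      rw [hβ]; ring
    · rw [hc, hPq n, hPn, hPhigh (n + 1) (by omega)]
      rw [hα]; ring
    · rw [show e = (e - 1) + 1 by omega, hPq (e - 1), hm _ (by omega),
        hPhigh (e - 1) (by omega), hPhigh _ (by omega : n < e - 1 + 1)]
      ring
  have hmod : m %ₘ P = r := (div_modByMonic_unique q r hP ⟨by rw [hr]; ring, hrd⟩).2
  have h01 := hPq 0
  norm_num at h01
  rw [hmod, hr, coeff_sub, h01, hP1, mul_zero, add_zero]

end Aux

theorem dual_GRSsub_last {F : Type*} [Field F] [Fintype F] {n k : ℕ}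
    (hk1 : 3 ≤ k) (hk2 : k ≤ n - 2)
    (a : Fin n → F) (ha : Function.Injective a)
    (u : Fin n → F) (hu : ∀ i, u i = ∏ j ∈ univ.erase i, (a j - a i)⁻¹)
    (ht : ∑ A ∈ (univ : Finset (Fin n)).powersetCard (n - 1), ∏ j ∈ A, a j = 0)
    (w : Fin n → F)
    (hw : ∀ i, w i = u i * ∑ t ∈ (univ.erase i).powersetCard (n - 2), ∏ j ∈ t, a j) :
    dualCode (GRSsub n k (k - 1) a (fun _ => 1)) = GRSsub n (n - k) (n - k - 1) a w := by
  classical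
  have hn5 : 5 ≤ n := by omega
  have hkk : k - (k - 1) = 1 := by omega
  have hnk : n - k - (n - k - 1) = 1 := by omega
  have hcard : #(univ : Finset (Fin n)) = n := by simp
  have ha' : Set.InjOn a ↑(univ : Finset (Fin n)) := ha.injOn
  set P : F[X] := ∏ i, (X - C (a i)) with hPdef
  have hPmonic : P.Monic := monic_prod_of_monic _ _ fun i _ => monic_X_sub_C (a i)
  have hPdeg : P.natDegree = n := by
    rw [hPdef, natDegree_prod_of_monic _ _ fun i _ => monic_X_sub_C (a i)]
    simp [natDegree_X_sub_C]
  have hP1 : P.coeff 1 = 0 := by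
    have h := coeff_prod_X_sub_C' (univ : Finset (Fin n)) a (k := 1) (by omega)
    rw [hcard] at h
    rw [hPdef, h, ht, mul_zero]
  -- erase-product facts
  have hcerase : ∀ i : Fin n, (univ.erase i).card = n - 1 := fun i => by
    rw [Finset.card_erase_of_mem (mem_univ i), hcard]
  have hfact : ∀ i : Fin n, P = (X - C (a i)) * ∏ j ∈ univ.erase i, (X - C (a j)) :=
    fun i => (Finset.mul_prod_erase univ _ (mem_univ i)).symm
  have hN0 : ∀ i : Fin n, (∏ j ∈ univ.erase i, (X - C (a j))).coeff 0
      = ∏ j ∈ univ.erase i, (-(a j)) := by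
    intro i
    rw [coeff_zero_eq_eval_zero, eval_prod]
    exact Finset.prod_congr rfl fun j _ => by simp
  have hane : ∀ i, a i ≠ 0 := by
    intro i hai
    have h := hP1
    rw [hfact i, hai, map_zero, sub_zero] at h
    have h1 : (X * ∏ j ∈ univ.erase i, (X - C (a j))).coeff 1
        = (∏ j ∈ univ.erase i, (X - C (a j))).coeff 0 :=
      coeff_X_mul (∏ j ∈ univ.erase i, (X - C (a j))) 0
    rw [h1, hN0 i] at h
    obtain ⟨j, hj, hj0⟩ := Finset.prod_eq_zero_iff.mp h
    exact (Finset.mem_erase.mp hj).1 (ha (by rw [neg_eq_zero.mp hj0, hai]))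
  have hP0 : P.coeff 0 ≠ 0 := by
    rw [hPdef, coeff_zero_eq_eval_zero, eval_prod]
    rw [Finset.prod_ne_zero_iff]
    intro i _
    simp [hane i]
  -- basis coefficient
  have hNc : ∀ i : Fin n, (∏ j ∈ univ.erase i, (X - C (a j))).coeff 1
      = (-1 : F) ^ (n - 2) * ∑ t ∈ (univ.erase i).powersetCard (n - 2), ∏ j ∈ t, a j := by
    intro i
    have h := coeff_prod_X_sub_C' (univ.erase i) a (k := 1) (by rw [hcerase i]; omega)
    rw [hcerase i, show n - 1 - 1 = n - 2 by omega] at h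
    exact h
  have hbasis : ∀ i, Lagrange.basis univ a i
      = C ((-1 : F) ^ (n - 1) * u i) * ∏ j ∈ univ.erase i, (X - C (a j)) := by
    intro i
    rw [Lagrange.basis]
    have : ∀ j ∈ univ.erase i, Lagrange.basisDivisor (a i) (a j)
        = C ((a i - a j)⁻¹) * (X - C (a j)) := fun j _ => rfl
    rw [Finset.prod_congr rfl this, Finset.prod_mul_distrib, ← map_prod]
    congr 2
    rw [hu i, ← hcerase i]
    calc ∏ j ∈ univ.erase i, (a i - a j)⁻¹
        = ∏ j ∈ univ.erase i, ((-1) * (a j - a i)⁻¹) := by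
          refine Finset.prod_congr rfl fun j _ => ?_
          rw [← neg_sub, inv_neg]; ring
      _ = (-1) ^ #(univ.erase i) * ∏ j ∈ univ.erase i, (a j - a i)⁻¹ := by
          rw [Finset.prod_mul_distrib, Finset.prod_const]
  have hwb : ∀ i, w i = -((Lagrange.basis univ a i).coeff 1) := by
    intro i
    rw [hbasis i, coeff_C_mul, hNc i, hw i]
    have h2 : (-1 : F) ^ (n - 1) * (-1 : F) ^ (n - 2) = -1 := by
      rw [← pow_add]
      exact Odd.neg_one_pow ⟨n - 2, by omega⟩
    set S := ∑ t ∈ (univ.erase i).powersetCard (n - 2), ∏ j ∈ t, a j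
    linear_combination (u i * S) * h2
  have hu0 : ∀ i, u i ≠ 0 := by
    intro i
    rw [hu i, Finset.prod_ne_zero_iff]
    intro j hj
    exact inv_ne_zero (sub_ne_zero.mpr fun h => (Finset.mem_erase.mp hj).1 (ha h))
  have hNi1 : ∀ i, (∏ j ∈ univ.erase i, (X - C (a j))).coeff 1 ≠ 0 := by
    intro i h0
    have hc1 : P.coeff 1 = (∏ j ∈ univ.erase i, (X - C (a j))).coeff 0
        - a i * (∏ j ∈ univ.erase i, (X - C (a j))).coeff 1 := by
      rw [hfact i, sub_mul, coeff_sub, coeff_C_mul]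
      congr 1
      exact coeff_X_mul _ 0
    rw [h0, mul_zero, sub_zero, hP1, hN0 i] at hc1
    obtain ⟨j, hj, hj0⟩ := Finset.prod_eq_zero_iff.mp hc1.symm
    exact hane j (neg_eq_zero.mp hj0)
  have hw0 : ∀ i, w i ≠ 0 := by
    intro i
    rw [hwb i, neg_ne_zero, hbasis i, coeff_C_mul]
    exact mul_ne_zero (mul_ne_zero (pow_ne_zero _ (neg_ne_zero.mpr one_ne_zero)) (hu0 i)) (hNi1 i)
  have hsum : ∀ c : Fin n → F, ∑ i, w i * c i = -((Lagrange.interpolate univ a c).coeff 1) := by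
    intro c
    rw [Lagrange.interpolate_apply, finset_sum_coeff, ← Finset.sum_neg_distrib]
    refine Finset.sum_congr rfl fun i _ => ?_
    rw [coeff_C_mul, hwb i]; ring
  have hPeval : ∀ i, P.eval (a i) = 0 := by
    intro i
    rw [hPdef, eval_prod]
    exact Finset.prod_eq_zero (mem_univ i) (by simp)
  have key2 : ∀ h : F[X], ∑ i, w i * h.eval (a i) = -((h %ₘ P).coeff 1) := by
    intro h
    have hi : h %ₘ P = Lagrange.interpolate univ a (fun i => h.eval (a i)) := by
      refine Lagrange.eq_interpolate_of_eval_eq (r := fun i => h.eval (a i)) ha' ?_ ?_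
      · rw [hcard, ← hPdeg, ← degree_eq_natDegree hPmonic.ne_zero]
        exact degree_modByMonic_lt h hPmonic
      · intro i _
        show eval (a i) (h %ₘ P) = eval (a i) h
        conv_rhs => rw [← modByMonic_add_div h P]
        rw [eval_add, eval_mul, hPeval i, zero_mul, add_zero]
    rw [hsum, ← hi]
  apply Set.eq_of_subset_of_subset
  · -- dual ⊆ RHS
    intro x hx
    set g := Lagrange.interpolate univ a (fun i => (w i)⁻¹ * x i) with hgdef
    have hgd : g.degree < (n : WithBot ℕ) := by
      have h := Lagrange.degree_interpolate_lt (fun i => (w i)⁻¹ * x i) ha'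
      rwa [hcard] at h
    have hxe : ∀ i, x i = w i * g.eval (a i) := by
      intro i
      rw [hgdef, Lagrange.eval_interpolate_at_node _ ha' (mem_univ i), ← mul_assoc,
        mul_inv_cancel₀ (hw0 i), one_mul]
    have hrel : ∀ p, p ≤ k → p ≠ 1 → ((g * X ^ p) %ₘ P).coeff 1 = 0 := by
      intro p hpk hp1
      have hmem : (fun i => (1 : F) * (X ^ p : F[X]).eval (a i))
          ∈ GRSsub n k (k - 1) a (fun _ => 1) := by
        refine ⟨X ^ p, by rw [natDegree_X_pow]; exact hpk, ?_, fun i => rfl⟩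
        rw [hkk, coeff_X_pow]
        exact if_neg fun h => hp1 h.symm
      have h0 := hx _ hmem
      have he : ∑ i, x i * ((1 : F) * (X ^ p : F[X]).eval (a i))
          = ∑ i, w i * ((g * X ^ p).eval (a i)) := by
        refine Finset.sum_congr rfl fun i _ => ?_
        rw [hxe i, eval_mul]; ring
      rw [he, key2] at h0
      exact neg_eq_zero.mp h0
    have hg1 : g.coeff 1 = 0 := by
      have h := hrel 0 (by omega) (by omega)
      rwa [pow_zero, mul_one, (modByMonic_eq_self_iff hPmonic).mpr
        (by rw [degree_eq_natDegree hPmonic.ne_zero, hPdeg]; exact hgd)] at h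
    have htop0 : ∀ d, n ≤ d → g.coeff d = 0 := by
      intro d hd
      refine coeff_eq_zero_of_degree_lt (lt_of_lt_of_le hgd ?_)
      exact_mod_cast hd
    have hvan : ∀ p, 2 ≤ p → p ≤ k → g.coeff (n + 1 - p) = 0 := by
      intro p
      induction p using Nat.strong_induction_on with
      | _ p IH =>
        intro hp2 hpk
        have htop : ∀ d, n + 1 - p < d → g.coeff d = 0 := by
          intro d hd
          by_cases hdn : n ≤ d
          · exact htop0 d hdn
          · have h3 : n + 1 - d < p := by omega
            have h := IH (n + 1 - d) h3 (by omega) (by omega)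
            rwa [show n + 1 - (n + 1 - d) = d by omega] at h
        have hm : ∀ d, n + 1 < d → (g * X ^ p).coeff d = 0 := by
          intro d hd
          rw [coeff_mul_X_pow']
          split_ifs with h
          · exact htop _ (by omega)
          · rfl
        have h := hrel p hpk (by omega)
        rw [modByMonic_coeff_one' hPmonic hPdeg (by omega) hm hP1] at h
        have h1 : (g * X ^ p).coeff 1 = 0 := by
          rw [coeff_mul_X_pow', if_neg (by omega)]
        have h2 : (g * X ^ p).coeff (n + 1) = g.coeff (n + 1 - p) := by
          rw [coeff_mul_X_pow', if_pos (by omega)]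
        rw [h1, h2, zero_sub, neg_eq_zero] at h
        exact (mul_eq_zero.mp h).resolve_right hP0
    refine ⟨g, ?_, ?_, hxe⟩
    · rw [natDegree_le_iff_coeff_eq_zero]
      intro N hN
      by_cases hNn : n ≤ N
      · exact htop0 N hNn
      · have h := hvan (n + 1 - N) (by omega) (by omega)
        rwa [show n + 1 - (n + 1 - N) = N by omega] at h
    · rw [hnk]; exact hg1
  · -- RHS ⊆ dual
    rintro x ⟨g, hgdeg, hg1, hxe⟩ c ⟨f, hfdeg, hf1, hce⟩
    rw [hnk] at hg1
    rw [hkk] at hf1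
    have he : ∑ i, x i * c i = ∑ i, w i * ((g * f).eval (a i)) := by
      refine Finset.sum_congr rfl fun i _ => ?_
      rw [hxe i, hce i, eval_mul]; ring
    have hmd : (g * f).natDegree ≤ n := natDegree_mul_le.trans (by omega)
    rw [he, key2, neg_eq_zero,
      modByMonic_coeff_one' hPmonic hPdeg (by omega)
        (fun d hd => coeff_eq_zero_of_natDegree_lt (by omega)) hP1,
      coeff_eq_zero_of_natDegree_lt (show (g * f).natDegree < n + 1 by omega), zero_mul, sub_zero,
      coeff_mul, Finset.Nat.sum_antidiagonal_eq_sum_range_succ_mk]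
    simp [Finset.sum_range_succ, hg1, hf1]
end

section
/- Let 3 ≤ k ≤ n-2, a_1,...,a_n ∈ F_q pairwise distinct, u_i = ∏_{j≠i}(a_j - a_i)^{-1}, h_1 = ∑_i u_i a_i^n and h_2 = ∑_i u_i a_i^{n+1}. If h_1 = 0 and h_2 = 0, then the dual code of GRS_{k,2}(a) equals the evaluation code {(u_1 g(a_1),...,u_n g(a_n)) : g ∈ span{1, x, ..., x^{n-k-2}, x^{n-k+1}}}. -/
open Finset Polynomial

section Aux

lemma coeff_lagrange_basis {F : Type*} [Field F] {n : ℕ} (a : Fin n → F)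
    (ha : Function.Injective a) (i : Fin n) :
    (Lagrange.basis univ a i).coeff (n - 1) = ∏ j ∈ univ.erase i, (a i - a j)⁻¹ := by
  have hinj : Set.InjOn a (univ : Finset (Fin n)) := ha.injOn
  have hnd : (Lagrange.basis univ a i).natDegree = n - 1 := by
    simpa using Lagrange.natDegree_basis hinj (mem_univ i)
  rw [← hnd, Polynomial.coeff_natDegree, Lagrange.basis, Polynomial.leadingCoeff_prod]
  refine Finset.prod_congr rfl fun j hj => ?_
  have hne : a i ≠ a j := fun h => (mem_erase.mp hj).1.symm (ha h)
  rw [Lagrange.basisDivisor, leadingCoeff_mul, leadingCoeff_C, leadingCoeff_X_sub_C, mul_one]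

lemma lagrange_sum {F : Type*} [Field F] {n : ℕ} (hn : 1 ≤ n) (a : Fin n → F)
    (ha : Function.Injective a) (u : Fin n → F)
    (hu : ∀ i, u i = ∏ j ∈ univ.erase i, (a j - a i)⁻¹) (m : ℕ) (hm : m ≤ n - 1) :
    ∑ i, u i * a i ^ m = if m = n - 1 then (-1 : F) ^ (n - 1) else 0 := by
  have hinj : Set.InjOn a (univ : Finset (Fin n)) := ha.injOn
  have key : ∀ i, u i = (-1 : F) ^ (n-1) * ∏ j ∈ univ.erase i, (a i - a j)⁻¹ := by
    intro i
    rw [hu i]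
    have : ∀ j ∈ univ.erase i, (a j - a i)⁻¹ = (-1 : F) * (a i - a j)⁻¹ := by
      intro j hj
      rw [← neg_sub (a i) (a j), ← neg_inv]; ring
    rw [Finset.prod_congr rfl this, Finset.prod_mul_distrib, Finset.prod_const,
      Finset.card_erase_of_mem (mem_univ i), card_univ, Fintype.card_fin]
  have hX : (X : F[X]) ^ m = Lagrange.interpolate univ a fun i => a i ^ m := by
    have := Lagrange.eq_interpolate (f := (X : F[X])^m) hinj (by
      simp only [card_univ, Fintype.card_fin]
      calc ((X : F[X])^m).degree ≤ m := by simpa using degree_X_pow_le (R := F) m (R := F) m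
      _ < (n : WithBot ℕ) := by exact_mod_cast Nat.lt_of_le_pred hn hm)
    simpa using this
  have := congrArg (fun p : F[X] => p.coeff (n - 1)) hX
  simp only [Lagrange.interpolate_apply, Polynomial.finset_sum_coeff, coeff_X_pow,
    Polynomial.coeff_C_mul] at this
  calc ∑ i, u i * a i ^ m
      = (-1 : F) ^ (n-1) * ∑ i, (a i ^ m) * (Lagrange.basis univ a i).coeff (n-1) := by
        rw [Finset.mul_sum]; exact Finset.sum_congr rfl fun i _ => by
          rw [key i, coeff_lagrange_basis a ha i]; ring
    _ = (-1 : F) ^ (n-1) * (if n - 1 = m then 1 else 0) := by rw [← this]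
    _ = if m = n - 1 then (-1 : F) ^ (n - 1) else 0 := by
        by_cases h : m = n - 1 <;> simp [h, eq_comm]

lemma pairing_zero {F : Type*} [Field F] {n : ℕ} (hn : 1 ≤ n) (a : Fin n → F)
    (ha : Function.Injective a) (u : Fin n → F)
    (hu : ∀ i, u i = ∏ j ∈ univ.erase i, (a j - a i)⁻¹)
    (h1 : ∑ i, u i * a i ^ n = 0) (h2 : ∑ i, u i * a i ^ (n + 1) = 0)
    (P : F[X]) (hP1 : P.natDegree ≤ n + 1) (hP2 : P.coeff (n - 1) = 0) :
    ∑ i, u i * P.eval (a i) = 0 := by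
  have hev : ∀ x : F, P.eval x = ∑ m ∈ range (n+2), P.coeff m * x ^ m := fun x =>
    Polynomial.eval_eq_sum_range' (by omega) x
  calc ∑ i, u i * P.eval (a i)
      = ∑ m ∈ range (n+2), P.coeff m * ∑ i, u i * a i ^ m := by
        simp_rw [hev, Finset.mul_sum]
        rw [Finset.sum_comm]
        exact Finset.sum_congr rfl fun m _ =>
          Finset.sum_congr rfl fun i _ => mul_left_comm _ _ _
    _ = 0 := by
        refine Finset.sum_eq_zero fun m hm => ?_
        rw [mem_range] at hm
        by_cases hm1 : m = n + 1
        · rw [hm1, h2, mul_zero]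
        by_cases hm2 : m = n
        · rw [hm2, h1, mul_zero]
        by_cases hm3 : m = n - 1
        · rw [hm3, hP2, zero_mul]
        · rw [lagrange_sum hn a ha u hu m (by omega), if_neg hm3, mul_zero]

end Aux

theorem dual_GRSsub_two_case1 {F : Type*} [Field F] [Fintype F] {n k : ℕ}
    (hk1 : 3 ≤ k) (hk2 : k ≤ n - 2)
    (a : Fin n → F) (ha : Function.Injective a)
    (u : Fin n → F) (hu : ∀ i, u i = ∏ j ∈ univ.erase i, (a j - a i)⁻¹)
    (h1 : ∑ i, u i * a i ^ n = 0) (h2 : ∑ i, u i * a i ^ (n + 1) = 0) :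
    dualCode (GRSsub n k 2 a (fun _ => 1)) =
      {c | ∃ g : F[X], g.natDegree ≤ n - k + 1 ∧ g.coeff (n - k - 1) = 0 ∧
        g.coeff (n - k) = 0 ∧ ∀ i, c i = u i * g.eval (a i)} := by
  have hkn : k + 2 ≤ n := by omega
  have hn : 1 ≤ n := by omega
  ext w
  constructor
  · -- dual ⊆ evaluation code
    intro hw
    have hune : ∀ i, u i ≠ 0 := by
      intro i
      rw [hu i]
      refine Finset.prod_ne_zero_iff.mpr fun j hj => ?_
      exact inv_ne_zero (sub_ne_zero.mpr fun h => (mem_erase.mp hj).1 (ha h))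
    have hinj : Set.InjOn a (univ : Finset (Fin n)) := ha.injOn
    set g : F[X] := Lagrange.interpolate univ a (fun i => (u i)⁻¹ * w i) with hg
    have heval : ∀ i, g.eval (a i) = (u i)⁻¹ * w i := fun i =>
      Lagrange.eval_interpolate_at_node _ hinj (mem_univ i)
    have hwi : ∀ i, w i = u i * g.eval (a i) := by
      intro i
      rw [heval i, ← mul_assoc, mul_inv_cancel₀ (hune i), one_mul]
    have hdlt : g.degree < (n : WithBot ℕ) := by
      simpa only [card_univ, Fintype.card_fin] using Lagrange.degree_interpolate_lt _ hinj
    have hnat : g.natDegree < n := by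
      rcases eq_or_ne g 0 with h | h
      · simpa [h] using (by omega : 0 < n)
      · exact (Polynomial.natDegree_lt_iff_degree_lt h).mpr hdlt
    have hge : ∀ e, n ≤ e → g.coeff e = 0 := fun e he =>
      Polynomial.coeff_eq_zero_of_natDegree_lt (lt_of_lt_of_le hnat he)
    -- the key expansion
    have hT : ∀ d : ℕ, ∑ i, w i * a i ^ d
        = ∑ e ∈ range n, g.coeff e * ∑ i, u i * a i ^ (e + d) := by
      intro d
      have hev : ∀ x : F, g.eval x = ∑ e ∈ range n, g.coeff e * x ^ e := fun x =>
        Polynomial.eval_eq_sum_range' hnat x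
      calc ∑ i, w i * a i ^ d = ∑ i, ∑ e ∈ range n, g.coeff e * (u i * a i ^ (e + d)) := by
            refine Finset.sum_congr rfl fun i _ => ?_
            rw [hwi i, hev, Finset.mul_sum, Finset.sum_mul]
            exact Finset.sum_congr rfl fun e _ => by rw [pow_add]; ring
        _ = _ := by
            rw [Finset.sum_comm]
            exact Finset.sum_congr rfl fun e _ => by rw [Finset.mul_sum]
    have hx : ∀ d : ℕ, d ≤ k → d ≠ k - 2 → ∑ i, w i * a i ^ d = 0 := by
      intro d hdk hdne
      refine hw (fun i => a i ^ d) ⟨X ^ d, ?_, ?_, fun i => ?_⟩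
      · simpa using hdk
      · rw [Polynomial.coeff_X_pow, if_neg (fun h => hdne h.symm)]
      · simp
    have hvan : ∀ d : ℕ, d ≤ k → d ≠ k - 2 → g.coeff (n - 1 - d) = 0 := by
      intro d
      induction d using Nat.strong_induction_on with
      | _ d IH =>
        intro hdk hdne
        have heq := hx d hdk hdne
        rw [hT d] at heq
        rw [Finset.sum_eq_single (n - 1 - d)] at heq
        · rw [(by omega : n - 1 - d + d = n - 1),
            lagrange_sum hn a ha u hu (n-1) le_rfl, if_pos rfl] at heq
          have : ((-1 : F) ^ (n-1)) ≠ 0 := pow_ne_zero _ (neg_ne_zero.mpr one_ne_zero)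
          exact (mul_eq_zero.mp heq).resolve_right this
        · intro e he hene
          rw [mem_range] at he
          by_cases hlow : e + d ≤ n - 2
          · rw [lagrange_sum hn a ha u hu (e+d) (by omega), if_neg (by omega), mul_zero]
          by_cases hen : e + d = n
          · rw [hen, h1, mul_zero]
          by_cases hen1 : e + d = n + 1
          · rw [hen1, h2, mul_zero]
          by_cases hmid : e + d = n - 1
          · exact absurd (by omega : e = n - 1 - d) hene
          · -- e + d ≥ n+2
            have hd' : g.coeff e = 0 := by
              have := IH (n - 1 - e) (by omega) (by omega) (by omega)
              rwa [(by omega : n - 1 - (n - 1 - e) = e)] at this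
            rw [hd', zero_mul]
        · intro habs
          exact absurd (mem_range.mpr (by omega)) habs
    refine ⟨g, ?_, ?_, ?_, hwi⟩
    · rw [Polynomial.natDegree_le_iff_coeff_eq_zero]
      intro m hm
      by_cases hmn : n ≤ m
      · exact hge m hmn
      · have := hvan (n - 1 - m) (by omega) (by omega)
        rwa [(by omega : n - 1 - (n - 1 - m) = m)] at this
    · have := hvan k le_rfl (by omega)
      rwa [(by omega : n - 1 - k = n - k - 1)] at this
    · have := hvan (k - 1) (by omega) (by omega)
      rwa [(by omega : n - 1 - (k - 1) = n - k)] at this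
  · -- evaluation code ⊆ dual
    rintro ⟨g, hg1, hg2, hg3, hwg⟩ c ⟨f, hf1, hf2, hfc⟩
    have key : ∑ i, u i * (g * f).eval (a i) = 0 := by
      refine pairing_zero hn a ha u hu h1 h2 (g * f) ?_ ?_
      · calc (g * f).natDegree ≤ g.natDegree + f.natDegree := Polynomial.natDegree_mul_le
          _ ≤ (n - k + 1) + k := add_le_add hg1 hf1
          _ = n + 1 := by omega
      · rw [Polynomial.coeff_mul]
        refine Finset.sum_eq_zero fun p hp => ?_
        have hpe : p.1 + p.2 = n - 1 := Finset.HasAntidiagonal.mem_antidiagonal.mp hp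
        by_cases hd : n - k + 1 < p.1
        · rw [Polynomial.coeff_eq_zero_of_natDegree_lt (lt_of_le_of_lt hg1 hd), zero_mul]
        by_cases he : k < p.2
        · rw [Polynomial.coeff_eq_zero_of_natDegree_lt (lt_of_le_of_lt hf1 he), mul_zero]
        -- p.2 ∈ {k-2, k-1, k}
        have : p.2 = k - 2 ∨ p.1 = n - k ∨ p.1 = n - k - 1 := by omega
        rcases this with h | h | h
        · rw [h, hf2, mul_zero]
        · rw [h, hg3, zero_mul]
        · rw [h, hg2, zero_mul]
    calc ∑ i, w i * c i = ∑ i, u i * (g * f).eval (a i) := by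
          refine Finset.sum_congr rfl fun i _ => ?_
          rw [hwg i, hfc i, Polynomial.eval_mul]
          ring
      _ = 0 := key
end
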